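/- arXiv:math/0403179 — 4 statements merged into one kernel-verified Lean document; each statement's English description precedes it below -/
import Mathlib

section
/- For every γ ≥ 0 and every function v : ℝ → ℝ that is continuous on [0, ∞), continuously differentiable on (0, ∞), and such that both v and v′ are square-integrable on (0, ∞), one has ∫₀^∞ v′(x)² dx − γ · v(0)² ≥ −γ² ∫₀^∞ v(x)² dx. -/
open MeasureTheory Real Filter Topology

private lemma robin_cross_integrable (v : ℝ → ℝ)
    (hd : ∀ x ∈ Set.Ioi (0:ℝ), DifferentiableAt ℝ v x)
    (hd' : ContinuousOn (deriv v) (Set.Ioi 0))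
    (hv2 : IntegrableOn (fun x => (v x) ^ 2) (Set.Ioi 0) volume)
    (hdv2 : IntegrableOn (fun x => (deriv v x) ^ 2) (Set.Ioi 0) volume) :
    IntegrableOn (fun x => 2 * v x * deriv v x) (Set.Ioi 0) volume := by
  have hvc : ContinuousOn v (Set.Ioi 0) := fun x hx =>
    (hd x hx).continuousAt.continuousWithinAt
  have hmeas : AEStronglyMeasurable (fun x => 2 * v x * deriv v x)
      (volume.restrict (Set.Ioi (0:ℝ))) :=
    ((continuousOn_const.mul hvc).mul hd').aestronglyMeasurable measurableSet_Ioi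
  refine Integrable.mono' (hv2.add hdv2) hmeas (ae_of_all _ fun x => ?_)
  have h1 := sq_nonneg (v x - deriv v x)
  have h2 := sq_nonneg (v x + deriv v x)
  rw [Real.norm_eq_abs, abs_le]
  simp only [Pi.add_apply]
  constructor <;> nlinarith

private lemma robin_ftc (v : ℝ → ℝ)
    (hd : ∀ x ∈ Set.Ioi (0:ℝ), DifferentiableAt ℝ v x)
    (hd' : ContinuousOn (deriv v) (Set.Ioi 0))
    (hv2 : IntegrableOn (fun x => (v x) ^ 2) (Set.Ioi 0) volume)
    (hdv2 : IntegrableOn (fun x => (deriv v x) ^ 2) (Set.Ioi 0) volume)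
    (a : ℝ) (ha : 0 < a) :
    ∫ x in Set.Ioi a, 2 * v x * deriv v x = - v a ^ 2 := by
  have hvc : ContinuousOn v (Set.Ioi 0) := fun x hx =>
    (hd x hx).continuousAt.continuousWithinAt
  have hg : IntegrableOn (fun x => 2 * v x * deriv v x) (Set.Ioi 0) volume :=
    robin_cross_integrable v hd hd' hv2 hdv2
  have hga : IntegrableOn (fun x => 2 * v x * deriv v x) (Set.Ioi a) volume :=
    hg.mono_set (Set.Ioi_subset_Ioi ha.le)
  -- FTC on [a, b]
  have hftc : ∀ b, a ≤ b → ∫ x in a..b, 2 * v x * deriv v x = v b ^ 2 - v a ^ 2 := by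
    intro b hab
    have hsub : Set.uIcc a b ⊆ Set.Ioi (0:ℝ) := by
      rw [Set.uIcc_of_le hab]
      intro x hx
      exact lt_of_lt_of_le ha hx.1
    have hder : ∀ x ∈ Set.uIcc a b,
        HasDerivAt (fun y => v y ^ 2) (2 * v x * deriv v x) x := by
      intro x hx
      have hdx : HasDerivAt v (deriv v x) x := (hd x (hsub hx)).hasDerivAt
      simpa using hdx.fun_pow 2
    have hcont : ContinuousOn (fun x => 2 * v x * deriv v x) (Set.uIcc a b) :=
      (continuousOn_const.mul (hvc.mono hsub)).mul (hd'.mono hsub)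
    exact intervalIntegral.integral_eq_sub_of_hasDerivAt hder hcont.intervalIntegrable
  -- limit of v b ^ 2 as b → ∞
  set I := ∫ x in Set.Ioi a, 2 * v x * deriv v x with hI
  have hlim : Tendsto (fun b => v b ^ 2) atTop (𝓝 (v a ^ 2 + I)) := by
    have h1 : Tendsto (fun b => ∫ x in a..b, 2 * v x * deriv v x) atTop (𝓝 I) :=
      intervalIntegral_tendsto_integral_Ioi a hga tendsto_id
    have h2 : Tendsto (fun b => v a ^ 2 + ∫ x in a..b, 2 * v x * deriv v x) atTop
        (𝓝 (v a ^ 2 + I)) := tendsto_const_nhds.add h1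
    refine h2.congr' ?_
    filter_upwards [eventually_ge_atTop a] with b hb
    rw [hftc b hb]; ring
  set L := v a ^ 2 + I with hL
  have hL0 : 0 ≤ L := ge_of_tendsto' hlim (fun b => sq_nonneg _)
  have hLzero : L = 0 := by
    by_contra hne
    have hLpos : 0 < L := lt_of_le_of_ne hL0 (Ne.symm hne)
    have hev : ∀ᶠ b in atTop, L / 2 ≤ v b ^ 2 :=
      hlim.eventually (eventually_ge_nhds (show L / 2 < L by linarith))
    obtain ⟨M, hM⟩ := hev.exists_forall_of_atTop
    set M' := max M 1 with hM'
    have hInt : IntegrableOn (fun x => (v x)^2) (Set.Ioi M') volume :=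
      hv2.mono_set (Set.Ioi_subset_Ioi (le_trans zero_le_one (le_max_right M 1)))
    have hconst : Integrable (fun _ : ℝ => L / 2) (volume.restrict (Set.Ioi M')) := by
      refine Integrable.mono' hInt aestronglyMeasurable_const ?_
      rw [ae_restrict_iff' measurableSet_Ioi]
      refine ae_of_all _ fun x hx => ?_
      rw [Real.norm_eq_abs, abs_of_nonneg (by linarith)]
      exact hM x (le_trans (le_max_left M 1) hx.le)
    rw [integrable_const_iff] at hconst
    rcases hconst with h | h
    · exact (by linarith : L / 2 ≠ 0) h
    · have h := h.measure_univ_lt_top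
      simp [Measure.restrict_apply_univ, Real.volume_Ioi] at h
  have : I = - v a ^ 2 := by rw [hL] at hLzero; linarith
  exact this

/-- The one-dimensional Robin inequality on the half-line:
`∫₀^∞ v'(x)² dx - γ v(0)² ≥ -γ² ∫₀^∞ v(x)² dx`. -/
theorem stmt1 (γ : ℝ) (hγ : 0 ≤ γ) (v : ℝ → ℝ)
    (hc : ContinuousOn v (Set.Ici 0))
    (hd : ∀ x ∈ Set.Ioi (0:ℝ), DifferentiableAt ℝ v x)
    (hd' : ContinuousOn (deriv v) (Set.Ioi 0))
    (hv2 : IntegrableOn (fun x => (v x) ^ 2) (Set.Ioi 0) volume)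
    (hdv2 : IntegrableOn (fun x => (deriv v x) ^ 2) (Set.Ioi 0) volume) :
    (∫ x in Set.Ioi (0:ℝ), (deriv v x) ^ 2) - γ * (v 0) ^ 2 ≥
      -γ ^ 2 * ∫ x in Set.Ioi (0:ℝ), (v x) ^ 2 := by
  have hg : IntegrableOn (fun x => 2 * v x * deriv v x) (Set.Ioi 0) volume :=
    robin_cross_integrable v hd hd' hv2 hdv2
  set a : ℕ → ℝ := fun n => 1 / (n + 1) with ha
  have hapos : ∀ n, 0 < a n := fun n => by positivity
  have hamono : Antitone a := by
    intro m n hmn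
    apply one_div_le_one_div_of_le (by positivity)
    have : (m : ℝ) ≤ n := Nat.cast_le.2 hmn
    linarith
  have haten : Tendsto a atTop (𝓝 0) := tendsto_one_div_add_atTop_nhds_zero_nat
  have hsmono : Monotone (fun n => Set.Ioi (a n)) := fun m n hmn =>
    Set.Ioi_subset_Ioi (hamono hmn)
  have hsunion : (⋃ n, Set.Ioi (a n)) = Set.Ioi (0:ℝ) := by
    ext x
    simp only [Set.mem_iUnion, Set.mem_Ioi]
    constructor
    · rintro ⟨n, hn⟩; exact (hapos n).trans hn
    · intro hx
      obtain ⟨n, hn⟩ := exists_nat_one_div_lt hx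
      exact ⟨n, hn⟩
  have key : ∀ f : ℝ → ℝ, IntegrableOn f (Set.Ioi 0) volume →
      Tendsto (fun n => ∫ x in Set.Ioi (a n), f x) atTop
        (𝓝 (∫ x in Set.Ioi (0:ℝ), f x)) := by
    intro f hf
    have := tendsto_setIntegral_of_monotone (fun n => measurableSet_Ioi) hsmono
      (by rw [hsunion]; exact hf)
    rwa [hsunion] at this
  have hDa : Tendsto (fun n => ∫ x in Set.Ioi (a n), (deriv v x) ^ 2) atTop
      (𝓝 (∫ x in Set.Ioi (0:ℝ), (deriv v x) ^ 2)) := key _ hdv2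
  have hWa : Tendsto (fun n => ∫ x in Set.Ioi (a n), (v x) ^ 2) atTop
      (𝓝 (∫ x in Set.Ioi (0:ℝ), (v x) ^ 2)) := key _ hv2
  have hva : Tendsto (fun n => v (a n) ^ 2) atTop (𝓝 (v 0 ^ 2)) := by
    have h0 : Tendsto a atTop (𝓝[Set.Ici (0:ℝ)] 0) :=
      tendsto_nhdsWithin_of_tendsto_nhds_of_eventually_within a haten
        (Eventually.of_forall fun n => (hapos n).le)
    exact ((hc 0 Set.self_mem_Ici).tendsto.comp h0).pow 2
  -- the inequality at level n
  have hn : ∀ n, (∫ x in Set.Ioi (a n), (deriv v x) ^ 2) - γ * v (a n) ^ 2 +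
      γ ^ 2 * ∫ x in Set.Ioi (a n), (v x) ^ 2 ≥ 0 := by
    intro n
    have hsub : Set.Ioi (a n) ⊆ Set.Ioi (0:ℝ) := Set.Ioi_subset_Ioi (hapos n).le
    have hd2 : IntegrableOn (fun x => (deriv v x) ^ 2) (Set.Ioi (a n)) volume :=
      hdv2.mono_set hsub
    have hw2 : IntegrableOn (fun x => (v x) ^ 2) (Set.Ioi (a n)) volume :=
      hv2.mono_set hsub
    have hgn : IntegrableOn (fun x => 2 * v x * deriv v x) (Set.Ioi (a n)) volume :=
      hg.mono_set hsub
    have hcross : ∫ x in Set.Ioi (a n), 2 * v x * deriv v x = - v (a n) ^ 2 :=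
      robin_ftc v hd hd' hv2 hdv2 (a n) (hapos n)
    have hsq : 0 ≤ ∫ x in Set.Ioi (a n), (deriv v x + γ * v x) ^ 2 :=
      setIntegral_nonneg measurableSet_Ioi fun x _ => sq_nonneg _
    have hsplit : ∫ x in Set.Ioi (a n), (deriv v x + γ * v x) ^ 2 =
        (∫ x in Set.Ioi (a n), (deriv v x) ^ 2) +
          γ * (∫ x in Set.Ioi (a n), 2 * v x * deriv v x) +
          γ ^ 2 * ∫ x in Set.Ioi (a n), (v x) ^ 2 := by
      have step : ∫ x in Set.Ioi (a n), (deriv v x + γ * v x) ^ 2 =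
          ∫ x in Set.Ioi (a n), ((deriv v x ^ 2 + γ * (2 * v x * deriv v x)) +
            γ ^ 2 * (v x ^ 2)) := by
        apply setIntegral_congr_fun measurableSet_Ioi
        intro x _
        ring
      have hgg : IntegrableOn (fun x => deriv v x ^ 2 + γ * (2 * v x * deriv v x))
          (Set.Ioi (a n)) volume := hd2.add (hgn.const_mul γ)
      rw [step, integral_add hgg (hw2.const_mul (γ^2)),
        integral_add hd2 (hgn.const_mul γ), integral_const_mul, integral_const_mul]
    rw [hsplit, hcross] at hsq
    linarith [hsq]
  have hcomb : Tendsto (fun n => (∫ x in Set.Ioi (a n), (deriv v x) ^ 2) -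
      γ * v (a n) ^ 2 + γ ^ 2 * ∫ x in Set.Ioi (a n), (v x) ^ 2) atTop
      (𝓝 ((∫ x in Set.Ioi (0:ℝ), (deriv v x) ^ 2) - γ * v 0 ^ 2 +
        γ ^ 2 * ∫ x in Set.Ioi (0:ℝ), (v x) ^ 2)) :=
    (hDa.sub (hva.const_mul γ)).add (hWa.const_mul (γ^2))
  have hfinal : (∫ x in Set.Ioi (0:ℝ), (deriv v x) ^ 2) - γ * v 0 ^ 2 +
      γ ^ 2 * ∫ x in Set.Ioi (0:ℝ), (v x) ^ 2 ≥ 0 :=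
    ge_of_tendsto' hcomb hn
  linarith
end

section
/- Let l > 0 and γ > 0. Then there is a unique μ > 0 satisfying μ · tanh(μ) = γ l, and the infimum, over all functions v : ℝ → ℝ that are continuous on [−l, l], continuously differentiable on (−l, l), with ∫_{−l}^{l} v′(x)² dx < ∞ and ∫_{−l}^{l} v(x)² dx > 0, of the Rayleigh quotient (∫_{−l}^{l} v′(x)² dx − γ (v(−l)² + v(l)²)) / ∫_{−l}^{l} v(x)² dx equals −μ²/l². -/
open MeasureTheory Real Filter Topology

noncomputable section

/-- Admissibility for the one-dimensional Robin problem on `(-l, l)`: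
continuous on `[-l, l]`, continuously differentiable on `(-l, l)`,
with `∫ v'² < ∞` and `∫ v² > 0`. -/
def CondI (l : ℝ) (v : ℝ → ℝ) : Prop :=
  ContinuousOn v (Set.Icc (-l) l) ∧
  (∀ x ∈ Set.Ioo (-l) l, DifferentiableAt ℝ v x) ∧
  ContinuousOn (deriv v) (Set.Ioo (-l) l) ∧
  IntegrableOn (fun x => (deriv v x) ^ 2) (Set.Ioo (-l) l) volume ∧
  0 < ∫ x in Set.Ioo (-l) l, (v x) ^ 2

/-- The Rayleigh quotient for the Robin problem on `(-l, l)` with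
boundary points `±l`. -/
def QI (l γ : ℝ) (v : ℝ → ℝ) : ℝ :=
  ((∫ x in Set.Ioo (-l) l, (deriv v x) ^ 2) - γ * ((v (-l)) ^ 2 + (v l) ^ 2)) /
    ∫ x in Set.Ioo (-l) l, (v x) ^ 2

/- ### Auxiliary lemmas -/

lemma tanh_sdc (x : ℝ) : Real.tanh x = Real.sinh x / Real.cosh x := Real.tanh_eq_sinh_div_cosh x

lemma abs_tanh_le_one (x : ℝ) : |Real.tanh x| ≤ 1 := by
  rw [tanh_sdc, abs_div, abs_of_pos (Real.cosh_pos x), div_le_one (Real.cosh_pos x)]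
  exact (abs_le.2 ⟨by nlinarith [Real.sinh_lt_cosh (-x), Real.sinh_neg x, Real.cosh_neg x],
    (Real.sinh_lt_cosh x).le⟩)

lemma tanh_strictMono' : StrictMono Real.tanh := by
  intro a b hab
  rw [tanh_sdc, tanh_sdc, div_lt_div_iff₀ (Real.cosh_pos a) (Real.cosh_pos b)]
  nlinarith [Real.sinh_sub a b, Real.sinh_neg_iff.2 (sub_neg.2 hab)]

lemma tanh_pos' {x : ℝ} (hx : 0 < x) : 0 < Real.tanh x := by
  have := tanh_strictMono' hx; simpa [Real.tanh_zero] using this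

lemma continuous_tanh' : Continuous Real.tanh := by
  have : Real.tanh = fun x => Real.sinh x / Real.cosh x := funext tanh_sdc
  rw [this]
  exact Real.continuous_sinh.div Real.continuous_cosh (fun x => (Real.cosh_pos x).ne')

lemma hasDerivAt_phi (β x : ℝ) :
    HasDerivAt (fun x => β * Real.tanh (β * x)) (β ^ 2 - (β * Real.tanh (β * x)) ^ 2) x := by
  have hlin : HasDerivAt (fun x : ℝ => β * x) β x := by
    simpa using (hasDerivAt_id x).const_mul β
  have hs : HasDerivAt (fun x => Real.sinh (β * x)) (Real.cosh (β * x) * β) x :=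
    (Real.hasDerivAt_sinh (β * x)).comp x hlin
  have hc : HasDerivAt (fun x => Real.cosh (β * x)) (Real.sinh (β * x) * β) x :=
    (Real.hasDerivAt_cosh (β * x)).comp x hlin
  have hcne : Real.cosh (β * x) ≠ 0 := (Real.cosh_pos _).ne'
  have hdiv := (hs.div hc hcne)
  have htanh : HasDerivAt (fun x => Real.tanh (β * x))
      ((Real.cosh (β * x) * β * Real.cosh (β * x) - Real.sinh (β * x) * (Real.sinh (β * x) * β)) /
        Real.cosh (β * x) ^ 2) x := by
    have : (fun x => Real.tanh (β * x)) = fun x => Real.sinh (β * x) / Real.cosh (β * x) :=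
      funext fun y => tanh_sdc (β * y)
    rw [this]
    exact hdiv
  have := htanh.const_mul β
  refine this.congr_deriv ?_
  have hsq := Real.cosh_sq_sub_sinh_sq (β * x)
  rw [tanh_sdc]
  field_simp

lemma mul_tanh_strictMonoOn : StrictMonoOn (fun μ => μ * Real.tanh μ) (Set.Ici 0) := by
  intro a ha b hb hab
  simp only
  have hb0 : 0 < b := lt_of_le_of_lt ha hab
  have htb : 0 < Real.tanh b := tanh_pos' hb0
  rcases eq_or_lt_of_le (Set.mem_Ici.1 ha) with h0 | h0
  · rw [← h0]; simpa using mul_pos hb0 htb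
  · calc a * Real.tanh a ≤ a * Real.tanh b :=
        mul_le_mul_of_nonneg_left (tanh_strictMono' hab).le ha
    _ < b * Real.tanh b := mul_lt_mul_of_pos_right hab htb

lemma exu (l γ : ℝ) (hl : 0 < l) (hγ : 0 < γ) :
    ∃! μ : ℝ, 0 < μ ∧ μ * Real.tanh μ = γ * l := by
  have hcont : Continuous fun μ : ℝ => μ * Real.tanh μ := continuous_id.mul continuous_tanh'
  set M : ℝ := max 1 (γ * l / Real.tanh 1) with hM
  have ht1 : 0 < Real.tanh 1 := tanh_pos' one_pos
  have hM1 : (1:ℝ) ≤ M := le_max_left _ _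
  have hM0 : (0:ℝ) ≤ M := by linarith
  have hfM : γ * l ≤ M * Real.tanh M := by
    have h1 : γ * l / Real.tanh 1 ≤ M := le_max_right _ _
    have h2 : γ * l ≤ M * Real.tanh 1 := by
      rw [div_le_iff₀ ht1] at h1; linarith
    have h3 : Real.tanh 1 ≤ Real.tanh M := (tanh_strictMono'.le_iff_le).2 hM1
    nlinarith
  have hIVT := intermediate_value_Icc hM0 (hcont.continuousOn)
  have hmem : γ * l ∈ Set.Icc ((fun μ : ℝ => μ * Real.tanh μ) 0) ((fun μ : ℝ => μ * Real.tanh μ) M) := by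
    constructor
    · simp [Real.tanh_zero]; positivity
    · simpa using hfM
  obtain ⟨μ, hμmem, hμeq⟩ := hIVT hmem
  have hμpos : 0 < μ := by
    rcases eq_or_lt_of_le hμmem.1 with h | h
    · exfalso; rw [← h] at hμeq
      simp only [Real.tanh_zero, mul_zero] at hμeq
      nlinarith
    · exact h
  refine ⟨μ, ⟨hμpos, hμeq⟩, ?_⟩
  rintro ν ⟨hνpos, hνeq⟩
  exact mul_tanh_strictMonoOn.injOn (Set.mem_Ici.2 hνpos.le) (Set.mem_Ici.2 hμpos.le)
    (by show ν * Real.tanh ν = μ * Real.tanh μ; rw [hνeq, ← hμeq])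

lemma v0_deriv (β : ℝ) : deriv (fun x => Real.cosh (β * x)) = fun x => β * Real.sinh (β * x) := by
  funext x
  have hlin : HasDerivAt (fun x : ℝ => β * x) β x := by
    simpa using (hasDerivAt_id x).const_mul β
  have : HasDerivAt (fun x => Real.cosh (β * x)) (Real.sinh (β * x) * β) x :=
    (Real.hasDerivAt_cosh (β * x)).comp x hlin
  rw [this.deriv]; ring

lemma key (l γ β : ℝ) (hl : 0 < l) (hβγ : β * Real.tanh (β * l) = γ)
    (v : ℝ → ℝ) (hv : CondI l v) :
    ∫ x in Set.Ioo (-l) l, (deriv v x - β * Real.tanh (β * x) * v x) ^ 2 =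
      (∫ x in Set.Ioo (-l) l, (deriv v x) ^ 2) - γ * ((v (-l)) ^ 2 + (v l) ^ 2)
        + β ^ 2 * ∫ x in Set.Ioo (-l) l, (v x) ^ 2 := by
  obtain ⟨hc, hd, hdc, hint, -⟩ := hv
  set φ : ℝ → ℝ := fun x => β * Real.tanh (β * x) with hφdef
  have hφcont : Continuous φ := continuous_const.mul (continuous_tanh'.comp (continuous_const.mul continuous_id))
  have hφbd : ∀ x, |φ x| ≤ |β| := by
    intro x
    calc |φ x| = |β| * |Real.tanh (β * x)| := abs_mul _ _
    _ ≤ |β| * 1 := by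
        exact mul_le_mul_of_nonneg_left (abs_tanh_le_one _) (abs_nonneg _)
    _ = |β| := mul_one _
  have hsub : Set.Ioo (-l) l ⊆ Set.Icc (-l) l := Set.Ioo_subset_Icc_self
  have hms : MeasurableSet (Set.Ioo (-l) l) := measurableSet_Ioo
  obtain ⟨M, hM⟩ := isCompact_Icc.exists_bound_of_continuousOn hc
  have hM0 : 0 ≤ M := le_trans (norm_nonneg _) (hM (-l) (by constructor <;> linarith))
  have hvm : AEStronglyMeasurable v (volume.restrict (Set.Ioo (-l) l)) :=
    (hc.mono hsub).aestronglyMeasurable hms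
  have hdm : AEStronglyMeasurable (deriv v) (volume.restrict (Set.Ioo (-l) l)) :=
    hdc.aestronglyMeasurable hms
  have hv2 : IntegrableOn (fun x => (v x) ^ 2) (Set.Ioo (-l) l) volume :=
    ((hc.pow 2).integrableOn_Icc).mono_set hsub
  have hd1 : IntegrableOn (deriv v) (Set.Ioo (-l) l) volume := by
    have hg : IntegrableOn (fun x => (1 + (deriv v x) ^ 2) / 2) (Set.Ioo (-l) l) volume := by
      apply Integrable.div_const
      exact (integrableOn_const (by simp [Real.volume_Ioo])).add hint
    refine hg.mono' hdm (ae_of_all _ fun x => ?_)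
    rw [Real.norm_eq_abs]
    nlinarith [sq_nonneg (|deriv v x| - 1), sq_abs (deriv v x), abs_nonneg (deriv v x)]
  have hcross : IntegrableOn (fun x => φ x * v x * deriv v x) (Set.Ioo (-l) l) volume := by
    have hg : IntegrableOn (fun x => |β| * M * |deriv v x|) (Set.Ioo (-l) l) volume :=
      (hd1.abs.const_mul _)
    refine hg.mono' ((hφcont.aestronglyMeasurable.restrict.mul hvm).mul hdm) ?_
    rw [ae_restrict_iff' hms]
    refine ae_of_all _ fun x hx => ?_
    rw [Real.norm_eq_abs, abs_mul, abs_mul]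
    have h1 : |v x| ≤ M := by simpa [Real.norm_eq_abs] using hM x (hsub hx)
    have h0 := hφbd x
    exact mul_le_mul (mul_le_mul h0 h1 (abs_nonneg _) (abs_nonneg _)) le_rfl (abs_nonneg _)
      (by positivity)
  have hφv2 : IntegrableOn (fun x => (φ x * v x) ^ 2) (Set.Ioo (-l) l) volume := by
    have hg : IntegrableOn (fun x => β ^ 2 * (v x) ^ 2) (Set.Ioo (-l) l) volume :=
      hv2.const_mul _
    refine hg.mono' (((hφcont.aestronglyMeasurable.restrict.mul hvm)).pow 2) (ae_of_all _ fun x => ?_)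
    have := hφbd x
    rw [Real.norm_eq_abs, abs_of_nonneg (sq_nonneg _), mul_pow]
    have h2 : (φ x) ^ 2 ≤ β ^ 2 := by nlinarith [abs_nonneg (φ x), sq_abs (φ x), sq_abs β]
    nlinarith [sq_nonneg (v x)]
  have hmid : IntegrableOn (fun x => (β ^ 2 - (φ x) ^ 2) * (v x) ^ 2) (Set.Ioo (-l) l) volume := by
    have : (fun x => (β ^ 2 - (φ x) ^ 2) * (v x) ^ 2)
        = fun x => β ^ 2 * (v x) ^ 2 - (φ x * v x) ^ 2 := by
      funext x; ring
    rw [this]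
    exact (hv2.const_mul _).sub hφv2
  have hFTC : ∫ x in Set.Ioo (-l) l,
      ((β ^ 2 - (φ x) ^ 2) * (v x) ^ 2 + φ x * (2 * v x * deriv v x))
      = γ * (v l) ^ 2 + γ * (v (-l)) ^ 2 := by
    have hle : -l ≤ l := by linarith
    set F : ℝ → ℝ := fun x => φ x * (v x) ^ 2 with hF
    have hcontF : ContinuousOn F (Set.Icc (-l) l) :=
      (hφcont.continuousOn).mul (hc.pow 2)
    have hderivF : ∀ x ∈ Set.Ioo (-l) l, HasDerivWithinAt F
        ((β ^ 2 - (φ x) ^ 2) * (v x) ^ 2 + φ x * (2 * v x * deriv v x)) (Set.Ioi x) x := by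
      intro x hx
      have hv' : HasDerivAt v (deriv v x) x := (hd x hx).hasDerivAt
      have hv2' : HasDerivAt (fun x => (v x) ^ 2) (2 * v x * deriv v x) x := by
        have := hv'.pow 2
        refine this.congr_deriv ?_
        ring
      exact ((hasDerivAt_phi β x).mul hv2').hasDerivWithinAt
    have hintF : IntervalIntegrable
        (fun x => (β ^ 2 - (φ x) ^ 2) * (v x) ^ 2 + φ x * (2 * v x * deriv v x)) volume (-l) l := by
      rw [intervalIntegrable_iff_integrableOn_Ioo_of_le hle]
      refine hmid.add ?_
      have : (fun x => φ x * (2 * v x * deriv v x)) = fun x => 2 * (φ x * v x * deriv v x) := by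
        funext x; ring
      rw [this]
      exact hcross.const_mul 2
    have := intervalIntegral.integral_eq_sub_of_hasDeriv_right_of_le hle hcontF hderivF hintF
    rw [intervalIntegral.integral_of_le hle, MeasureTheory.integral_Ioc_eq_integral_Ioo] at this
    rw [this]
    have h1 : φ l = γ := hβγ
    have h2 : φ (-l) = -γ := by
      show β * Real.tanh (β * (-l)) = -γ
      rw [mul_neg, Real.tanh_neg, mul_neg, hβγ]
    show φ l * (v l) ^ 2 - φ (-l) * (v (-l)) ^ 2 = _
    rw [h1, h2]; ring
  have hsplit : (∫ x in Set.Ioo (-l) l, (β ^ 2 - (φ x) ^ 2) * (v x) ^ 2)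
      + ∫ x in Set.Ioo (-l) l, φ x * (2 * v x * deriv v x)
      = γ * (v l) ^ 2 + γ * (v (-l)) ^ 2 := by
    rw [← MeasureTheory.integral_add hmid]
    · exact hFTC
    · have : (fun x => φ x * (2 * v x * deriv v x)) = fun x => 2 * (φ x * v x * deriv v x) := by
        funext x; ring
      rw [this]; exact hcross.const_mul 2
  have hexp : ∫ x in Set.Ioo (-l) l, (deriv v x - φ x * v x) ^ 2
      = (∫ x in Set.Ioo (-l) l, (deriv v x) ^ 2)
        - (∫ x in Set.Ioo (-l) l, 2 * (φ x * v x * deriv v x))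
        + ∫ x in Set.Ioo (-l) l, (φ x * v x) ^ 2 := by
    have heq : (fun x => (deriv v x - φ x * v x) ^ 2)
        = fun x => ((deriv v x) ^ 2 - 2 * (φ x * v x * deriv v x)) + (φ x * v x) ^ 2 := by
      funext x; ring
    have hI1 : Integrable (fun x => (deriv v x) ^ 2 - 2 * (φ x * v x * deriv v x))
        (volume.restrict (Set.Ioo (-l) l)) := hint.sub (hcross.const_mul 2)
    rw [heq, MeasureTheory.integral_add hI1 hφv2,
      MeasureTheory.integral_sub hint (hcross.const_mul 2)]
  have h2cross : ∫ x in Set.Ioo (-l) l, φ x * (2 * v x * deriv v x)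
      = ∫ x in Set.Ioo (-l) l, 2 * (φ x * v x * deriv v x) := by
    congr 1; funext x; ring
  have hcomb : (∫ x in Set.Ioo (-l) l, (β ^ 2 - (φ x) ^ 2) * (v x) ^ 2)
      + ∫ x in Set.Ioo (-l) l, (φ x * v x) ^ 2
      = β ^ 2 * ∫ x in Set.Ioo (-l) l, (v x) ^ 2 := by
    rw [← MeasureTheory.integral_add hmid hφv2, ← MeasureTheory.integral_const_mul]
    congr 1; funext x; ring
  rw [hexp]
  have e1 := hsplit
  rw [h2cross] at e1
  linarith [hcomb]

/-- The eigenfunction `cosh (β x)` is admissible. -/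
lemma v0_cond (l β : ℝ) (hl : 0 < l) :
    CondI l (fun x => Real.cosh (β * x)) := by
  have hcont : Continuous fun x : ℝ => Real.cosh (β * x) :=
    Real.continuous_cosh.comp (continuous_const.mul continuous_id)
  have hlin : ∀ x : ℝ, HasDerivAt (fun x : ℝ => β * x) β x := fun x => by
    simpa using (hasDerivAt_id x).const_mul β
  have hdcont : Continuous fun x : ℝ => β * Real.sinh (β * x) :=
    continuous_const.mul (Real.continuous_sinh.comp (continuous_const.mul continuous_id))
  refine ⟨hcont.continuousOn, fun x _ =>
    ((Real.hasDerivAt_cosh (β * x)).comp x (hlin x)).differentiableAt, ?_, ?_, ?_⟩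
  · rw [v0_deriv β]
    exact hdcont.continuousOn
  · rw [v0_deriv β]
    exact ((hdcont.pow 2).continuousOn.integrableOn_Icc).mono_set Set.Ioo_subset_Icc_self
  · have hint : IntegrableOn (fun x => (Real.cosh (β * x)) ^ 2) (Set.Ioo (-l) l) volume :=
      ((hcont.pow 2).continuousOn.integrableOn_Icc).mono_set Set.Ioo_subset_Icc_self
    have h1 : (0:ℝ) < ∫ _x in Set.Ioo (-l) l, (1:ℝ) := by
      rw [MeasureTheory.setIntegral_const, MeasureTheory.measureReal_def, Real.volume_Ioo, smul_eq_mul, mul_one,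
        ENNReal.toReal_ofReal (by linarith)]
      linarith
    have h2 : (∫ _x in Set.Ioo (-l) l, (1:ℝ)) ≤ ∫ x in Set.Ioo (-l) l, (Real.cosh (β * x)) ^ 2 := by
      refine MeasureTheory.setIntegral_mono_on (integrableOn_const (by simp [Real.volume_Ioo]))
        hint measurableSet_Ioo (fun x _ => ?_)
      nlinarith [Real.one_le_cosh (β * x)]
    linarith

/-- On the interval `(-l, l)`, there is a unique `μ > 0` with `μ tanh μ = γ l`,
and the infimum of the Robin Rayleigh quotient equals `-μ²/l²`. -/
theorem stmt3 (l γ : ℝ) (hl : 0 < l) (hγ : 0 < γ) :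
    (∃! μ : ℝ, 0 < μ ∧ μ * Real.tanh μ = γ * l) ∧
    ∀ μ : ℝ, 0 < μ → μ * Real.tanh μ = γ * l →
      IsGLB {r : ℝ | ∃ v, CondI l v ∧ r = QI l γ v} (-μ ^ 2 / l ^ 2) := by
  refine ⟨exu l γ hl hγ, ?_⟩
  intro μ hμ htan
  have hlne : l ≠ 0 := hl.ne'
  set β : ℝ := μ / l with hβ
  have hβl : β * l = μ := by rw [hβ, div_mul_cancel₀ μ hlne]
  have hβγ : β * Real.tanh (β * l) = γ := by
    rw [hβl, hβ, div_mul_eq_mul_div, htan, mul_div_assoc, div_self hlne, mul_one]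
  have e : -μ ^ 2 / l ^ 2 = -(β ^ 2) := by
    rw [hβ, div_pow]; ring
  -- the eigenfunction
  set v0 : ℝ → ℝ := fun x => Real.cosh (β * x) with hv0def
  have hv0 : CondI l v0 := v0_cond l β hl
  have hC0 : 0 < ∫ x in Set.Ioo (-l) l, (v0 x) ^ 2 := hv0.2.2.2.2
  have hzero : ∫ x in Set.Ioo (-l) l, (deriv v0 x - β * Real.tanh (β * x) * v0 x) ^ 2 = 0 := by
    have hpt : (fun x => (deriv v0 x - β * Real.tanh (β * x) * v0 x) ^ 2) = fun _ => (0:ℝ) := by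
      funext x
      rw [hv0def, v0_deriv β]
      have : Real.tanh (β * x) * Real.cosh (β * x) = Real.sinh (β * x) := by
        rw [tanh_sdc, div_mul_cancel₀ _ (Real.cosh_pos (β * x)).ne']
      simp only
      rw [mul_assoc, this]
      ring
    rw [hpt, MeasureTheory.integral_zero]
  have hkey0 := key l γ β hl hβγ v0 hv0
  have hQ0 : QI l γ v0 = -μ ^ 2 / l ^ 2 := by
    rw [QI, e, div_eq_iff hC0.ne']
    rw [hzero] at hkey0
    linarith
  constructor
  · rintro r ⟨v, hv, rfl⟩
    have hkey := key l γ β hl hβγ v hv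
    have hnn : 0 ≤ ∫ x in Set.Ioo (-l) l, (deriv v x - β * Real.tanh (β * x) * v x) ^ 2 :=
      MeasureTheory.setIntegral_nonneg measurableSet_Ioo (fun x _ => sq_nonneg _)
    have hC : 0 < ∫ x in Set.Ioo (-l) l, (v x) ^ 2 := hv.2.2.2.2
    rw [QI, le_div_iff₀ hC, e]
    nlinarith
  · intro b hb
    have := hb ⟨v0, hv0, hQ0.symm⟩
    exact this

end
end

section
/- Let 1 < p < 2 and let Υ_p := { (x, y) ∈ ℝ² : x > 0, |y| < x^p } be a planar domain with an outward-pointing cusp at the origin. Then there exist a constant C > 0 and γ₀ > 0 such that for every γ ≥ γ₀ there is a function v admissible for Υ_p with J(v; γ, Υ_p) ≤ −C γ^{2/(2−p)}. In particular, Λ(Υ_p; γ) ≤ −C γ^{2/(2−p)} for all γ ≥ γ₀, so the asymptotics Λ = −C_Ω γ² + o(γ²) fails for domains with outward-pointing cusps. -/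
open MeasureTheory Real Filter Topology Set
open scoped ENNReal NNReal

noncomputable section

/-- A function is admissible for the Robin Rayleigh quotient on `Ω ⊆ ℝ^m`:
continuous on the closure, continuously differentiable on `Ω`, with
`0 < ∫_Ω v² < ∞`, `∫_Ω ‖∇v‖² < ∞` and `∫_{∂Ω} v² dH^{m-1} < ∞`. -/
def Admissible {m : ℕ} (Ω : Set (EuclideanSpace ℝ (Fin m)))
    (v : EuclideanSpace ℝ (Fin m) → ℝ) : Prop :=
  ContinuousOn v (closure Ω) ∧
  (∀ x ∈ Ω, DifferentiableAt ℝ v x) ∧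
  ContinuousOn (fun x => gradient v x) Ω ∧
  IntegrableOn (fun x => (v x) ^ 2) Ω volume ∧
  0 < ∫ x in Ω, (v x) ^ 2 ∧
  IntegrableOn (fun x => ‖gradient v x‖ ^ 2) Ω volume ∧
  IntegrableOn (fun x => (v x) ^ 2) (frontier Ω) μH[(m : ℝ) - 1]

/-- The Robin Rayleigh quotient
`J(v; γ, Ω) = (∫_Ω ‖∇v‖² - γ ∫_{∂Ω} v² dH^{m-1}) / ∫_Ω v²`. -/
def RQ {m : ℕ} (Ω : Set (EuclideanSpace ℝ (Fin m))) (γ : ℝ)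
    (v : EuclideanSpace ℝ (Fin m) → ℝ) : ℝ :=
  ((∫ x in Ω, ‖gradient v x‖ ^ 2) - γ * ∫ x in frontier Ω, (v x) ^ 2 ∂μH[(m : ℝ) - 1]) /
    ∫ x in Ω, (v x) ^ 2

/-- The principal Robin eigenvalue `Λ(Ω; γ)`, as an extended real:
the infimum of the Rayleigh quotient over admissible functions. -/
def principalEV {m : ℕ} (Ω : Set (EuclideanSpace ℝ (Fin m))) (γ : ℝ) : EReal :=
  sInf {x : EReal | ∃ v, Admissible Ω v ∧ x = (RQ Ω γ v : EReal)}

/-- The planar cusp domain `Υ_p = {(x, y) : x > 0, |y| < x^p}`. -/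
def cuspDomain (p : ℝ) : Set (EuclideanSpace ℝ (Fin 2)) :=
  {x | 0 < x 0 ∧ |x 1| < (x 0) ^ p}


namespace S16

/-- cutoff -/
def ψ (a t : ℝ) : ℝ := (max (1 - t/a) 0)^2
def ψd (a t : ℝ) : ℝ := -(2/a) * max (1 - t/a) 0

lemma ψ_nonneg (a t : ℝ) : 0 ≤ ψ a t := sq_nonneg _

lemma max_le_one {a t : ℝ} (ha : 0 < a) (ht : 0 ≤ t) : max (1 - t/a) 0 ≤ 1 := by
  apply max_le _ zero_le_one
  have : 0 ≤ t/a := div_nonneg ht ha.le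
  linarith

lemma ψ_le_one {a t : ℝ} (ha : 0 < a) (ht : 0 ≤ t) : ψ a t ≤ 1 := by
  have h0 : (0:ℝ) ≤ max (1 - t/a) 0 := le_max_right _ _
  have := max_le_one ha ht
  calc ψ a t ≤ 1^2 := by unfold ψ; exact pow_le_pow_left₀ h0 this 2
  _ = 1 := one_pow 2

lemma ψ_eq_zero {a t : ℝ} (h : a ≤ t) (ha : 0 < a) : ψ a t = 0 := by
  have : 1 - t/a ≤ 0 := by
    rw [sub_nonpos, le_div_iff₀ ha]; linarith
  unfold ψ
  rw [max_eq_right this]; norm_num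

lemma ψd_eq_zero {a t : ℝ} (h : a ≤ t) (ha : 0 < a) : ψd a t = 0 := by
  have : 1 - t/a ≤ 0 := by rw [sub_nonpos, le_div_iff₀ ha]; linarith
  unfold ψd; rw [max_eq_right this]; ring

lemma abs_ψd_le {a t : ℝ} (ha : 0 < a) (ht : 0 ≤ t) : |ψd a t| ≤ 2/a := by
  unfold ψd
  rw [abs_mul, abs_neg, abs_div]
  have h0 : (0:ℝ) ≤ max (1 - t/a) 0 := le_max_right _ _
  have h1 := max_le_one ha ht
  rw [abs_of_nonneg h0]
  have : |(2:ℝ)|/|a| = 2/a := by rw [abs_of_nonneg (by norm_num : (0:ℝ) ≤ 2), abs_of_pos ha]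
  rw [this]
  nlinarith [div_pos (by norm_num : (0:ℝ)<2) ha]

lemma ψ_ge_quarter {a t : ℝ} (ha : 0 < a) (ht : t ≤ a/2) : (1:ℝ)/4 ≤ ψ a t := by
  have h : (1:ℝ)/2 ≤ 1 - t/a := by
    have : t/a ≤ 1/2 := by rw [div_le_iff₀ ha]; linarith
    linarith
  have h2 : (1:ℝ)/2 ≤ max (1 - t/a) 0 := le_trans h (le_max_left _ _)
  have h0 : (0:ℝ) ≤ (1:ℝ)/2 := by norm_num
  calc (1:ℝ)/4 = (1/2)^2 := by norm_num
  _ ≤ (max (1 - t/a) 0)^2 := pow_le_pow_left₀ h0 h2 2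

lemma continuous_ψ (a : ℝ) : Continuous (ψ a) := by
  unfold ψ; fun_prop

lemma continuous_ψd (a : ℝ) : Continuous (ψd a) := by
  unfold ψd; fun_prop

lemma hasDerivAt_ψ {a : ℝ} (ha : 0 < a) (t : ℝ) : HasDerivAt (ψ a) (ψd a t) t := by
  rcases lt_trichotomy t a with h | rfl | h
  · -- t < a : locally ψ = (1 - s/a)^2
    have hev : (fun s => (1 - s/a)^2) =ᶠ[𝓝 t] ψ a := by
      filter_upwards [eventually_lt_nhds h] with s hs
      have : 0 ≤ 1 - s/a := by
        rw [sub_nonneg, div_le_one ha]; linarith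
      unfold ψ; rw [max_eq_left this]
    have hd : HasDerivAt (fun s => (1 - s/a)^2) (2*(1 - t/a)*(-(1/a))) t := by
      have h1 : HasDerivAt (fun s : ℝ => 1 - s/a) (-(1/a)) t := by
        simpa using ((hasDerivAt_id t).div_const a).const_sub 1
      simpa using h1.fun_pow 2
    have : HasDerivAt (ψ a) (2*(1 - t/a)*(-(1/a))) t := hd.congr_of_eventuallyEq hev.symm
    convert this using 1
    have hmax : max (1 - t/a) 0 = 1 - t/a := max_eq_left (by rw [sub_nonneg, div_le_one ha]; linarith)
    unfold ψd; rw [hmax]; ring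
  · -- t = a: derivative 0
    have hψd : ψd t t = 0 := ψd_eq_zero le_rfl ha
    rw [hψd]
    rw [hasDerivAt_iff_isLittleO]
    rw [Asymptotics.isLittleO_iff]
    intro c hc
    have hψt : ψ t t = 0 := ψ_eq_zero le_rfl ha
    have hev : ∀ᶠ s in 𝓝 t, |s - t| ≤ c * t^2 := by
      filter_upwards [Metric.ball_mem_nhds t (by positivity : (0:ℝ) < c * t^2)] with s hs
      rw [Metric.mem_ball, Real.dist_eq] at hs
      exact hs.le
    filter_upwards [hev] with s hs
    rw [hψt]
    simp only [zero_smul, sub_zero, smul_eq_mul]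
    rw [Real.norm_eq_abs, Real.norm_eq_abs]
    have hψs : |ψ t s| ≤ (s - t)^2 / t^2 := by
      rcases le_or_gt t s with h | h
      · rw [ψ_eq_zero h ha, abs_zero]; positivity
      · have h0 : 0 ≤ 1 - s/t := by rw [sub_nonneg, div_le_one ha]; linarith
        have hform : ψ t s = ((t - s)/t)^2 := by
          unfold ψ; rw [max_eq_left h0]; congr 1; field_simp
        rw [hform, abs_of_nonneg (sq_nonneg _), div_pow]
        have heq : (t-s)^2 = (s-t)^2 := by ring
        rw [heq]
    have ht2 : (0:ℝ) < t^2 := by positivity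
    rw [mul_zero, sub_zero]
    rw [le_div_iff₀ ht2] at hψs
    nlinarith [sq_abs (s - t), abs_nonneg (s - t), abs_nonneg (ψ t s)]
  · -- a < t : locally ψ = 0
    have hev : (fun _ : ℝ => (0:ℝ)) =ᶠ[𝓝 t] ψ a := by
      filter_upwards [eventually_gt_nhds h] with s hs
      exact (ψ_eq_zero hs.le ha).symm
    have : HasDerivAt (ψ a) 0 t := (hasDerivAt_const t 0).congr_of_eventuallyEq hev.symm
    convert this using 1
    exact ψd_eq_zero h.le ha


abbrev E2 := EuclideanSpace ℝ (Fin 2)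

def e0 : E2 := EuclideanSpace.single (0 : Fin 2) (1:ℝ)

lemma toDual_e0 : InnerProductSpace.toDual ℝ E2 e0 = EuclideanSpace.proj (0 : Fin 2) := by
  ext y
  simp [e0, InnerProductSpace.toDual_apply_apply, EuclideanSpace.inner_single_left]

lemma hasGradientAt (a : ℝ) (ha : 0 < a) (x : E2) :
    HasGradientAt (fun y : E2 => ψ a (y 0)) (ψd a (x 0) • e0) x := by
  have hF : HasFDerivAt (fun y : E2 => ψ a (y 0))
      (ψd a (x 0) • (EuclideanSpace.proj (0 : Fin 2) : E2 →L[ℝ] ℝ)) x := by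
    have h1 : HasFDerivAt (fun y : E2 => y 0)
        (EuclideanSpace.proj (0 : Fin 2) : E2 →L[ℝ] ℝ) x :=
      (EuclideanSpace.proj (0 : Fin 2) : E2 →L[ℝ] ℝ).hasFDerivAt
    have h2 := (hasDerivAt_ψ ha (x 0)).comp_hasFDerivAt x h1
    exact h2
  rw [hasGradientAt_iff_hasFDerivAt, _root_.map_smul, toDual_e0]
  exact hF

lemma gradient_eq (a : ℝ) (ha : 0 < a) (x : E2) :
    gradient (fun y : E2 => ψ a (y 0)) x = ψd a (x 0) • e0 :=
  (hasGradientAt a ha x).gradient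

lemma norm_gradient (a : ℝ) (ha : 0 < a) (x : E2) :
    ‖gradient (fun y : E2 => ψ a (y 0)) x‖ = |ψd a (x 0)| := by
  rw [gradient_eq a ha x, norm_smul]
  simp [e0, EuclideanSpace.norm_single, Real.norm_eq_abs]


lemma contApply (i : Fin 2) : Continuous (fun x : E2 => x i) :=
  (EuclideanSpace.proj i : E2 →L[ℝ] ℝ).continuous

lemma isOpen_cuspD {p : ℝ} (hp : 0 < p) : IsOpen (cuspDomain p) := by
  have h1 : IsOpen {x : E2 | 0 < x 0} := isOpen_lt continuous_const (contApply 0)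
  have h2 : IsOpen {x : E2 | |x 1| < (x 0) ^ p} :=
    isOpen_lt ((contApply 1).abs) ((Real.continuous_rpow_const hp.le).comp (contApply 0))
  exact (h1.inter h2)

lemma isClosed_K {p : ℝ} (hp : 0 < p) :
    IsClosed {x : E2 | 0 ≤ x 0 ∧ |x 1| ≤ (x 0) ^ p} := by
  have h1 : IsClosed {x : E2 | 0 ≤ x 0} := isClosed_le continuous_const (contApply 0)
  have h2 : IsClosed {x : E2 | |x 1| ≤ (x 0) ^ p} :=
    isClosed_le ((contApply 1).abs) ((Real.continuous_rpow_const hp.le).comp (contApply 0))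
  exact h1.inter h2

lemma closure_cuspD_subset {p : ℝ} (hp : 0 < p) :
    closure (cuspDomain p) ⊆ {x : E2 | 0 ≤ x 0 ∧ |x 1| ≤ (x 0) ^ p} := by
  apply closure_minimal _ (isClosed_K hp)
  intro x hx
  exact ⟨hx.1.le, hx.2.le⟩

lemma frontier_cuspD_subset {p : ℝ} (hp : 0 < p) :
    frontier (cuspDomain p) ⊆ {x : E2 | 0 ≤ x 0 ∧ |x 1| = (x 0) ^ p} := by
  intro x hx
  rw [(isOpen_cuspD hp).frontier_eq] at hx
  obtain ⟨hcl, hnot⟩ := hx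
  obtain ⟨h0, h1⟩ := closure_cuspD_subset hp hcl
  refine ⟨h0, ?_⟩
  rcases eq_or_lt_of_le h0 with h | h
  · have : (x 0) ^ p = 0 := by rw [← h, Real.zero_rpow hp.ne']
    rw [this]
    rw [← h] at h1
    rw [Real.zero_rpow hp.ne'] at h1
    exact le_antisymm h1 (abs_nonneg _)
  · rcases eq_or_lt_of_le h1 with h2 | h2
    · exact h2
    · exact absurd ⟨h, h2⟩ hnot

/-- boundary point -/
def bp (p t : ℝ) : E2 := WithLp.toLp 2 (![t, t ^ p] : Fin 2 → ℝ)

@[simp] lemma bp_apply0 (p t : ℝ) : bp p t 0 = t := rfl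
@[simp] lemma bp_apply1 (p t : ℝ) : bp p t 1 = t ^ p := rfl

lemma bp_mem_frontier {p t : ℝ} (hp : 0 < p) (ht : 0 ≤ t) :
    bp p t ∈ frontier (cuspDomain p) := by
  rw [(isOpen_cuspD hp).frontier_eq]
  constructor
  · -- in closure
    have key : ∀ n : ℕ, bp p t + (1/(n+1) : ℝ) • e0 ∈ cuspDomain p := by
      intro n
      have hδ : (0:ℝ) < 1/(n+1) := by positivity
      have hcoord0 : (bp p t + (1/(n+1) : ℝ) • e0) 0 = t + 1/(n+1) := by
        simp [e0, EuclideanSpace.single_apply]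
      have hcoord1 : (bp p t + (1/(n+1) : ℝ) • e0) 1 = t ^ p := by
        simp [e0, EuclideanSpace.single_apply]
      constructor
      · rw [hcoord0]; positivity
      · rw [hcoord0, hcoord1]
        rw [abs_of_nonneg (Real.rpow_nonneg ht p)]
        exact Real.rpow_lt_rpow ht (by linarith) hp
    have htend : Tendsto (fun n : ℕ => bp p t + (1/(n+1) : ℝ) • e0) atTop (𝓝 (bp p t)) := by
      have h0 : Tendsto (fun n : ℕ => (1/(n+1) : ℝ)) atTop (𝓝 0) :=
        tendsto_one_div_add_atTop_nhds_zero_nat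
      have := (h0.smul_const e0).const_add (bp p t)
      simpa using this
    exact mem_closure_of_tendsto htend (Eventually.of_forall key)
  · -- not in cusp
    intro hx
    have := hx.2
    rw [bp_apply1, bp_apply0, abs_of_nonneg (Real.rpow_nonneg ht p)] at this
    exact lt_irrefl _ this


lemma lipschitz_proj0 : LipschitzWith 1 (fun x : E2 => x 0) := by
  apply LipschitzWith.of_dist_le_mul
  intro x y
  rw [NNReal.coe_one, one_mul, EuclideanSpace.dist_eq]
  have h : dist (x 0) (y 0) ^ 2 ≤ ∑ i : Fin 2, dist (x i) (y i) ^ 2 := by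
    apply Finset.single_le_sum (f := fun i => dist (x i) (y i) ^ 2)
      (fun i _ => sq_nonneg _) (Finset.mem_univ 0)
  calc dist (x 0) (y 0) = Real.sqrt (dist (x 0) (y 0) ^ 2) := by
        rw [Real.sqrt_sq dist_nonneg]
  _ ≤ _ := Real.sqrt_le_sqrt h

lemma hM_lower {p ε : ℝ} (hp : 0 < p) (hε : 0 ≤ ε) :
    ENNReal.ofReal ε ≤ μH[1] (frontier (cuspDomain p) ∩ {x : E2 | x 0 ≤ ε}) := by
  set S := frontier (cuspDomain p) ∩ {x : E2 | x 0 ≤ ε} with hS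
  have himg : Icc (0:ℝ) ε ⊆ (fun x : E2 => x 0) '' S := by
    intro t ht
    exact ⟨bp p t, ⟨bp_mem_frontier hp ht.1, by simpa using ht.2⟩, rfl⟩
  calc ENNReal.ofReal ε = volume (Icc (0:ℝ) ε) := by rw [Real.volume_Icc, sub_zero]
  _ = μH[1] (Icc (0:ℝ) ε) := by rw [MeasureTheory.hausdorffMeasure_real]
  _ ≤ μH[1] ((fun x : E2 => x 0) '' S) := measure_mono himg
  _ ≤ ((1:ℝ≥0) : ℝ≥0∞) ^ (1:ℝ) * μH[1] S :=
        lipschitz_proj0.hausdorffMeasure_image_le zero_le_one S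
  _ = μH[1] S := by simp

lemma lip_rpow {p b : ℝ} (hp : 1 ≤ p) (hb : 0 ≤ b) :
    LipschitzOnWith (p * b ^ (p-1)).toNNReal (fun t : ℝ => t ^ p) (Icc (0:ℝ) b) := by
  apply (convex_Icc (0:ℝ) b).lipschitzOnWith_of_nnnorm_hasDerivWithin_le
    (f' := fun t => p * t ^ (p-1))
  · intro t ht
    exact (Real.hasDerivAt_rpow_const (Or.inr hp)).hasDerivWithinAt
  · intro t ht
    have h1 : |p * t ^ (p-1)| ≤ p * b ^ (p-1) := by
      rw [abs_mul]
      rw [abs_of_nonneg (by linarith : (0:ℝ) ≤ p),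
        abs_of_nonneg (Real.rpow_nonneg ht.1 _)]
      have := Real.rpow_le_rpow ht.1 ht.2 (by linarith : (0:ℝ) ≤ p - 1)
      nlinarith
    rw [← NNReal.coe_le_coe, coe_nnnorm, Real.norm_eq_abs,
      Real.coe_toNNReal _ (by nlinarith [abs_nonneg (p * t ^ (p-1))] : (0:ℝ) ≤ p * b ^ (p-1))]
    exact h1

/-- lower branch boundary point -/
def bn (p t : ℝ) : E2 := WithLp.toLp 2 (![t, -(t ^ p)] : Fin 2 → ℝ)

lemma lip_bp {p b : ℝ} (hp : 1 ≤ p) (hb : 0 ≤ b) :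
    LipschitzOnWith (1 + p * b ^ (p-1)).toNNReal (bp p) (Icc (0:ℝ) b) ∧
    LipschitzOnWith (1 + p * b ^ (p-1)).toNNReal (bn p) (Icc (0:ℝ) b) := by
  have hK : (0:ℝ) ≤ p * b ^ (p-1) := mul_nonneg (by linarith) (Real.rpow_nonneg hb _)
  have key : ∀ (f : ℝ → E2), (∀ t, f t 0 = t) → (∀ s t, dist (f s 1) (f t 1) = dist (s^p) (t^p)) →
      LipschitzOnWith (1 + p * b ^ (p-1)).toNNReal f (Icc (0:ℝ) b) := by
    intro f hf0 hf1
    apply LipschitzOnWith.of_dist_le_mul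
    intro s hs t ht
    have hlip := (lip_rpow hp hb).dist_le_mul s hs t ht
    rw [Real.coe_toNNReal _ hK] at hlip
    have hcoe : ((1 + p * b ^ (p-1)).toNNReal : ℝ) = 1 + p * b ^ (p-1) :=
      Real.coe_toNNReal _ (by linarith)
    rw [hcoe, EuclideanSpace.dist_eq]
    have hsum : ∑ i : Fin 2, dist (f s i) (f t i) ^ 2
        = dist s t ^ 2 + dist (s^p) (t^p) ^ 2 := by
      rw [Fin.sum_univ_two, hf0, hf0, hf1]
    rw [hsum]
    have h1 : Real.sqrt (dist s t ^ 2 + dist (s^p) (t^p) ^ 2)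
        ≤ dist s t + dist (s^p) (t^p) := by
      have hd0 : (0:ℝ) ≤ dist s t := dist_nonneg
      have hd1 : (0:ℝ) ≤ dist (s^p) (t^p) := dist_nonneg
      have h2 : dist s t ^ 2 + dist (s^p) (t^p) ^ 2
          ≤ (dist s t + dist (s^p) (t^p)) ^ 2 := by nlinarith
      calc Real.sqrt (dist s t ^ 2 + dist (s^p) (t^p) ^ 2)
          ≤ Real.sqrt ((dist s t + dist (s^p) (t^p)) ^ 2) := Real.sqrt_le_sqrt h2
      _ = dist s t + dist (s^p) (t^p) := Real.sqrt_sq (by positivity)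
    calc Real.sqrt (dist s t ^ 2 + dist (s^p) (t^p) ^ 2)
        ≤ dist s t + dist (s^p) (t^p) := h1
    _ ≤ dist s t + (p * b ^ (p-1)) * dist s t := by linarith
    _ = (1 + p * b ^ (p-1)) * dist s t := by ring
  constructor
  · exact key (bp p) (fun t => rfl) (fun s t => by simp [bp, Real.dist_eq])
  · refine key (bn p) (fun t => rfl) (fun s t => ?_)
    show dist (-(s^p)) (-(t^p)) = dist (s^p) (t^p)
    rw [dist_comm]
    simp [Real.dist_eq, abs_sub_comm]

lemma frontier_subset_curves {p b : ℝ} (hp : 0 < p) :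
    frontier (cuspDomain p) ∩ {x : E2 | x 0 ≤ b} ⊆
      bp p '' (Icc (0:ℝ) b) ∪ bn p '' (Icc (0:ℝ) b) := by
  intro x ⟨hx, hxb⟩
  obtain ⟨h0, h1⟩ := frontier_cuspD_subset hp hx
  rcases abs_eq (Real.rpow_nonneg h0 p) |>.mp h1 with h | h
  · left
    refine ⟨x 0, ⟨h0, hxb⟩, ?_⟩
    ext i
    fin_cases i
    · rfl
    · exact h.symm
  · right
    refine ⟨x 0, ⟨h0, hxb⟩, ?_⟩
    ext i
    fin_cases i
    · rfl
    · exact h.symm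

lemma hM_upper {p b : ℝ} (hp : 1 < p) (hb : 0 ≤ b) :
    μH[1] (frontier (cuspDomain p) ∩ {x : E2 | x 0 ≤ b}) < ⊤ := by
  obtain ⟨l1, l2⟩ := lip_bp hp.le hb
  have hIcc : μH[1] (Icc (0:ℝ) b) < ⊤ := by
    rw [MeasureTheory.hausdorffMeasure_real]
    exact measure_Icc_lt_top
  have h1 : μH[1] (bp p '' (Icc (0:ℝ) b)) < ⊤ := by
    calc μH[1] (bp p '' (Icc (0:ℝ) b))
        ≤ ((1 + p * b ^ (p-1)).toNNReal : ℝ≥0∞) ^ (1:ℝ) * μH[1] (Icc (0:ℝ) b) :=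
          l1.hausdorffMeasure_image_le zero_le_one
    _ < ⊤ := by
        apply ENNReal.mul_lt_top _ hIcc
        simp [ENNReal.rpow_one]
  have h2 : μH[1] (bn p '' (Icc (0:ℝ) b)) < ⊤ := by
    calc μH[1] (bn p '' (Icc (0:ℝ) b))
        ≤ ((1 + p * b ^ (p-1)).toNNReal : ℝ≥0∞) ^ (1:ℝ) * μH[1] (Icc (0:ℝ) b) :=
          l2.hausdorffMeasure_image_le zero_le_one
    _ < ⊤ := by
        apply ENNReal.mul_lt_top _ hIcc
        simp [ENNReal.rpow_one]
  calc μH[1] (frontier (cuspDomain p) ∩ {x : E2 | x 0 ≤ b})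
      ≤ μH[1] (bp p '' (Icc (0:ℝ) b) ∪ bn p '' (Icc (0:ℝ) b)) :=
        measure_mono (frontier_subset_curves (by linarith))
  _ ≤ μH[1] (bp p '' (Icc (0:ℝ) b)) + μH[1] (bn p '' (Icc (0:ℝ) b)) := measure_union_le _ _
  _ < ⊤ := ENNReal.add_lt_top.mpr ⟨h1, h2⟩


section helper
variable {α : Type*} [MeasurableSpace α] {μ : Measure α} {s U : Set α} {f : α → ℝ} {M : ℝ}

lemma integrableOn_zero_outside [TopologicalSpace α] [BorelSpace α]
    (hs : MeasurableSet s) (hU : MeasurableSet U) (hμ : μ (s ∩ U) ≠ ⊤)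
    (hf : Continuous f) (hM : ∀ x ∈ s ∩ U, ‖f x‖ ≤ M)
    (h0 : ∀ x ∈ s \ U, f x = 0) : IntegrableOn f s μ := by
  have h1 : IntegrableOn f (s ∩ U) μ := by
    apply Measure.integrableOn_of_bounded hμ hf.aestronglyMeasurable
    rw [ae_restrict_iff' (hs.inter hU)]
    exact Eventually.of_forall hM
  have h2 : IntegrableOn f (s \ U) μ := by
    exact IntegrableOn.congr_fun (integrableOn_zero)
      (fun x hx => (h0 x hx).symm) (hs.diff hU)
  have := h1.union h2
  rwa [Set.inter_union_diff] at this

lemma setIntegral_le_zero_outside [TopologicalSpace α] [BorelSpace α]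
    (hs : MeasurableSet s) (hU : MeasurableSet U) (hμ : μ (s ∩ U) ≠ ⊤)
    (hf : Continuous f) (hM : ∀ x ∈ s ∩ U, ‖f x‖ ≤ M)
    (h0 : ∀ x ∈ s \ U, f x = 0) :
    ∫ x in s, f x ∂μ ≤ M * (μ (s ∩ U)).toReal := by
  have hint := integrableOn_zero_outside hs hU hμ hf hM h0
  have hsplit : ∫ x in s, f x ∂μ = ∫ x in s ∩ U, f x ∂μ + ∫ x in s \ U, f x ∂μ := by
    have hdisj : Disjoint (s ∩ U) (s \ U) :=
      Set.disjoint_left.mpr (fun x hx hx2 => hx2.2 hx.2)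
    have := MeasureTheory.setIntegral_union hdisj (hs.diff hU)
      (hint.mono_set Set.inter_subset_left) (hint.mono_set Set.diff_subset)
    rwa [Set.inter_union_diff] at this
  have hz : ∫ x in s \ U, f x ∂μ = 0 := by
    rw [setIntegral_congr_fun (hs.diff hU) h0, integral_zero]
  have hle : ∫ x in s ∩ U, f x ∂μ ≤ M * (μ (s ∩ U)).toReal := by
    have := norm_setIntegral_le_of_norm_le_const (μ := μ) (s := s ∩ U) hμ.lt_top hM
    calc ∫ x in s ∩ U, f x ∂μ ≤ ‖∫ x in s ∩ U, f x ∂μ‖ := le_abs_self _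
    _ ≤ M * (μ (s ∩ U)).toReal := this
  rw [hsplit, hz, add_zero]
  exact hle

end helper

/-- the box -/
def box (p ε : ℝ) : Set E2 :=
  {x : E2 | x 0 ∈ Ioo (0:ℝ) (2*ε) ∧ x 1 ∈ Ioo (-((2*ε)^p)) ((2*ε)^p)}

lemma vol_box (p ε : ℝ) :
    volume (box p ε) = ENNReal.ofReal (2*ε) * ENNReal.ofReal (2*(2*ε)^p) := by
  have hbox : box p ε = (MeasurableEquiv.toLp 2 (Fin 2 → ℝ)).symm ⁻¹'
      (Set.univ.pi ![Ioo (0:ℝ) (2*ε), Ioo (-((2*ε)^p)) ((2*ε)^p)]) := by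
    ext x
    simp only [box, Set.mem_preimage, Set.mem_univ_pi, Fin.forall_fin_two]
    rfl
  rw [hbox, (EuclideanSpace.volume_preserving_symm_measurableEquiv_toLp (Fin 2)).measure_preimage
    ((MeasurableSet.univ_pi (fun i => by fin_cases i <;> exact measurableSet_Ioo)).nullMeasurableSet)]
  rw [volume_pi_pi]
  rw [Fin.prod_univ_two]
  simp only [Matrix.cons_val_zero, Matrix.cons_val_one, Matrix.head_cons]
  rw [Real.volume_Ioo, Real.volume_Ioo]
  congr 1
  · rw [sub_zero]
  · congr 1; ring

lemma W_subset_box {p ε : ℝ} (hp : 0 < p) (hε : 0 < ε) :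
    cuspDomain p ∩ {x : E2 | x 0 < 2*ε} ⊆ box p ε := by
  rintro x ⟨⟨h0, h1⟩, h2⟩
  refine ⟨⟨h0, h2⟩, ?_⟩
  rw [Set.mem_Ioo, ← abs_lt]
  exact h1.trans_le (Real.rpow_le_rpow h0.le h2.le hp.le)

lemma vol_W_ne_top {p ε : ℝ} (hp : 0 < p) (hε : 0 < ε) :
    volume (cuspDomain p ∩ {x : E2 | x 0 < 2*ε}) ≠ ⊤ := by
  apply ne_top_of_le_ne_top _ (measure_mono (W_subset_box hp hε))
  rw [vol_box]
  exact ENNReal.mul_ne_top ENNReal.ofReal_ne_top ENNReal.ofReal_ne_top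

lemma vol_W_toReal_le {p ε : ℝ} (hp : 0 < p) (hε : 0 < ε) :
    (volume (cuspDomain p ∩ {x : E2 | x 0 < 2*ε})).toReal ≤ 2*ε*(2*(2*ε)^p) := by
  have h1 : volume (cuspDomain p ∩ {x : E2 | x 0 < 2*ε}) ≤
      ENNReal.ofReal (2*ε) * ENNReal.ofReal (2*(2*ε)^p) := by
    rw [← vol_box]; exact measure_mono (W_subset_box hp hε)
  have h2 := ENNReal.toReal_mono (by exact ENNReal.mul_ne_top ENNReal.ofReal_ne_top ENNReal.ofReal_ne_top) h1
  calc (volume (cuspDomain p ∩ {x : E2 | x 0 < 2*ε})).toReal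
      ≤ (ENNReal.ofReal (2*ε) * ENNReal.ofReal (2*(2*ε)^p)).toReal := h2
  _ = (2*ε) * (2*(2*ε)^p) := by
      rw [ENNReal.toReal_mul, ENNReal.toReal_ofReal (by positivity),
        ENNReal.toReal_ofReal (by positivity)]


section main
variable {p ε : ℝ}

lemma tf_sq_nonneg (ε : ℝ) (x : E2) : (0:ℝ) ≤ (ψ (2*ε) (x 0))^2 := sq_nonneg _

lemma main_bounds (hp1 : 1 < p) (hp2 : p < 2) (hε : 0 < ε) :
    (Continuous fun x : E2 => ψ (2*ε) (x 0)) ∧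
    (∀ x : E2, DifferentiableAt ℝ (fun x : E2 => ψ (2*ε) (x 0)) x) ∧
    (Continuous fun x : E2 => gradient (fun y : E2 => ψ (2*ε) (y 0)) x) ∧
    IntegrableOn (fun x : E2 => (ψ (2*ε) (x 0))^2) (cuspDomain p) volume ∧
    (0 < ∫ x in cuspDomain p, (ψ (2*ε) (x 0))^2) ∧
    IntegrableOn (fun x : E2 => ‖gradient (fun y : E2 => ψ (2*ε) (y 0)) x‖^2) (cuspDomain p) volume ∧
    IntegrableOn (fun x : E2 => (ψ (2*ε) (x 0))^2) (frontier (cuspDomain p)) μH[1] ∧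
    (∫ x in cuspDomain p, ‖gradient (fun y : E2 => ψ (2*ε) (y 0)) x‖^2)
      ≤ (1/ε)^2 * (2*ε*(2*(2*ε)^p)) ∧
    (∫ x in cuspDomain p, (ψ (2*ε) (x 0))^2) ≤ 2*ε*(2*(2*ε)^p) ∧
    ε/16 ≤ ∫ x in frontier (cuspDomain p), (ψ (2*ε) (x 0))^2 ∂μH[1] := by
  have hp0 : 0 < p := by linarith
  have ha : (0:ℝ) < 2*ε := by linarith
  have hΩop : IsOpen (cuspDomain p) := isOpen_cuspD hp0
  have hΩm : MeasurableSet (cuspDomain p) := hΩop.measurableSet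
  have hUop : IsOpen {x : E2 | x 0 < 2*ε} := isOpen_lt (contApply 0) continuous_const
  have hUm : MeasurableSet {x : E2 | x 0 < 2*ε} := hUop.measurableSet
  have hU2m : MeasurableSet {x : E2 | x 0 ≤ 2*ε} :=
    (isClosed_le (contApply 0) continuous_const).measurableSet
  have hFm : MeasurableSet (frontier (cuspDomain p)) := isClosed_frontier.measurableSet
  have hcv : Continuous fun x : E2 => ψ (2*ε) (x 0) :=
    (continuous_ψ (2*ε)).comp (contApply 0)
  have hcv2 : Continuous fun x : E2 => (ψ (2*ε) (x 0))^2 := hcv.pow 2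
  have hgradeq : (fun x : E2 => gradient (fun y : E2 => ψ (2*ε) (y 0)) x)
      = fun x : E2 => ψd (2*ε) (x 0) • e0 := funext (fun x => gradient_eq (2*ε) ha x)
  have hcg : Continuous fun x : E2 => gradient (fun y : E2 => ψ (2*ε) (y 0)) x := by
    rw [hgradeq]
    exact (((continuous_ψd (2*ε)).comp (contApply 0)).smul continuous_const)
  have hcg2 : Continuous fun x : E2 => ‖gradient (fun y : E2 => ψ (2*ε) (y 0)) x‖^2 :=
    (hcg.norm).pow 2
  have hdiff : ∀ x : E2, DifferentiableAt ℝ (fun x : E2 => ψ (2*ε) (x 0)) x :=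
    fun x => (hasGradientAt (2*ε) ha x).hasFDerivAt.differentiableAt
  -- zero outside facts
  have hz_v : ∀ x : E2, 2*ε ≤ x 0 → ψ (2*ε) (x 0) = 0 := fun x hx => ψ_eq_zero hx ha
  have hz_g : ∀ x : E2, 2*ε ≤ x 0 →
      ‖gradient (fun y : E2 => ψ (2*ε) (y 0)) x‖ = 0 := by
    intro x hx
    rw [norm_gradient (2*ε) ha x, ψd_eq_zero hx ha, abs_zero]
  have hWne : volume (cuspDomain p ∩ {x : E2 | x 0 < 2*ε}) ≠ ⊤ := vol_W_ne_top hp0 hε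
  -- integrability of v^2 on Ω
  have hIntD : IntegrableOn (fun x : E2 => (ψ (2*ε) (x 0))^2) (cuspDomain p) volume := by
    apply integrableOn_zero_outside (M := 1) hΩm hUm hWne hcv2
    · rintro x ⟨⟨h0, -⟩, -⟩
      rw [Real.norm_eq_abs, abs_of_nonneg (sq_nonneg _)]
      simpa using pow_le_pow_left₀ (ψ_nonneg _ _) (ψ_le_one ha h0.le) 2
    · rintro x ⟨-, hx⟩
      rw [hz_v x (not_lt.mp hx)]; norm_num
  -- integrability of grad^2 on Ω and A bound
  have hMg : ∀ x ∈ cuspDomain p ∩ {x : E2 | x 0 < 2*ε},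
      ‖‖gradient (fun y : E2 => ψ (2*ε) (y 0)) x‖^2‖ ≤ (1/ε)^2 := by
    rintro x ⟨⟨h0, -⟩, -⟩
    rw [Real.norm_eq_abs, abs_of_nonneg (sq_nonneg _), norm_gradient (2*ε) ha x]
    have h1 : |ψd (2*ε) (x 0)| ≤ 2/(2*ε) := abs_ψd_le ha h0.le
    have h2 : (2:ℝ)/(2*ε) = 1/ε := by field_simp
    rw [h2] at h1
    exact pow_le_pow_left₀ (abs_nonneg _) h1 2
  have hzg2 : ∀ x ∈ cuspDomain p \ {x : E2 | x 0 < 2*ε},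
      ‖gradient (fun y : E2 => ψ (2*ε) (y 0)) x‖^2 = 0 := by
    rintro x ⟨-, hx⟩
    rw [hz_g x (not_lt.mp hx)]; norm_num
  have hIntA : IntegrableOn (fun x : E2 => ‖gradient (fun y : E2 => ψ (2*ε) (y 0)) x‖^2)
      (cuspDomain p) volume := integrableOn_zero_outside hΩm hUm hWne hcg2 hMg hzg2
  have hA : (∫ x in cuspDomain p, ‖gradient (fun y : E2 => ψ (2*ε) (y 0)) x‖^2)
      ≤ (1/ε)^2 * (2*ε*(2*(2*ε)^p)) := by
    calc (∫ x in cuspDomain p, ‖gradient (fun y : E2 => ψ (2*ε) (y 0)) x‖^2)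
        ≤ (1/ε)^2 * (volume (cuspDomain p ∩ {x : E2 | x 0 < 2*ε})).toReal :=
          setIntegral_le_zero_outside hΩm hUm hWne hcg2 hMg hzg2
    _ ≤ (1/ε)^2 * (2*ε*(2*(2*ε)^p)) := by
          apply mul_le_mul_of_nonneg_left (vol_W_toReal_le hp0 hε) (by positivity)
  -- D bound
  have hMv : ∀ x ∈ cuspDomain p ∩ {x : E2 | x 0 < 2*ε}, ‖(ψ (2*ε) (x 0))^2‖ ≤ 1 := by
    rintro x ⟨⟨h0, -⟩, -⟩
    rw [Real.norm_eq_abs, abs_of_nonneg (sq_nonneg _)]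
    simpa using pow_le_pow_left₀ (ψ_nonneg _ _) (ψ_le_one ha h0.le) 2
  have hzv2 : ∀ x ∈ cuspDomain p \ {x : E2 | x 0 < 2*ε}, (ψ (2*ε) (x 0))^2 = 0 := by
    rintro x ⟨-, hx⟩
    rw [hz_v x (not_lt.mp hx)]; norm_num
  have hD : (∫ x in cuspDomain p, (ψ (2*ε) (x 0))^2) ≤ 2*ε*(2*(2*ε)^p) := by
    calc (∫ x in cuspDomain p, (ψ (2*ε) (x 0))^2)
        ≤ 1 * (volume (cuspDomain p ∩ {x : E2 | x 0 < 2*ε})).toReal :=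
          setIntegral_le_zero_outside hΩm hUm hWne hcv2 hMv hzv2
    _ = (volume (cuspDomain p ∩ {x : E2 | x 0 < 2*ε})).toReal := one_mul _
    _ ≤ 2*ε*(2*(2*ε)^p) := vol_W_toReal_le hp0 hε
  -- D positive
  have hDpos : 0 < ∫ x in cuspDomain p, (ψ (2*ε) (x 0))^2 := by
    rw [setIntegral_pos_iff_support_of_nonneg_ae
      (Eventually.of_forall (fun x => sq_nonneg _)) hIntD]
    have hsub : cuspDomain p ∩ {x : E2 | x 0 < ε} ⊆
        Function.support (fun x : E2 => (ψ (2*ε) (x 0))^2) ∩ cuspDomain p := by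
      rintro x ⟨hx, hxε⟩
      refine ⟨?_, hx⟩
      have hxε' : x 0 < ε := hxε
      have h14 : (1:ℝ)/4 ≤ ψ (2*ε) (x 0) := ψ_ge_quarter ha (by linarith : x 0 ≤ 2*ε/2)
      have : (0:ℝ) < (ψ (2*ε) (x 0))^2 := by positivity
      exact ne_of_gt this
    have hopen : IsOpen (cuspDomain p ∩ {x : E2 | x 0 < ε}) :=
      hΩop.inter (isOpen_lt (contApply 0) continuous_const)
    have hne : (cuspDomain p ∩ {x : E2 | x 0 < ε}).Nonempty := by
      refine ⟨WithLp.toLp 2 (![ε/2, 0] : Fin 2 → ℝ), ⟨⟨?_, ?_⟩, ?_⟩⟩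
      · show (0:ℝ) < ε/2; linarith
      · show |(0:ℝ)| < (ε/2)^p
        rw [abs_zero]
        exact Real.rpow_pos_of_pos (by linarith) p
      · show (ε/2 : ℝ) < ε; linarith
    calc (0:ℝ≥0∞) < volume (cuspDomain p ∩ {x : E2 | x 0 < ε}) := hopen.measure_pos volume hne
    _ ≤ volume (Function.support (fun x : E2 => (ψ (2*ε) (x 0))^2) ∩ cuspDomain p) :=
          measure_mono hsub
  -- boundary integrability
  have hμF : μH[1] (frontier (cuspDomain p) ∩ {x : E2 | x 0 ≤ 2*ε}) ≠ ⊤ :=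
    (hM_upper hp1 ha.le).ne
  have hIntB : IntegrableOn (fun x : E2 => (ψ (2*ε) (x 0))^2) (frontier (cuspDomain p)) μH[1] := by
    apply integrableOn_zero_outside (M := 1) hFm hU2m hμF hcv2
    · rintro x ⟨hxf, -⟩
      have h0 := (frontier_cuspD_subset hp0 hxf).1
      rw [Real.norm_eq_abs, abs_of_nonneg (sq_nonneg _)]
      simpa using pow_le_pow_left₀ (ψ_nonneg _ _) (ψ_le_one ha h0) 2
    · rintro x ⟨-, hx⟩
      rw [hz_v x (le_of_lt (not_le.mp hx))]; norm_num
  -- B lower bound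
  have hB : ε/16 ≤ ∫ x in frontier (cuspDomain p), (ψ (2*ε) (x 0))^2 ∂μH[1] := by
    set S := frontier (cuspDomain p) ∩ {x : E2 | x 0 ≤ ε} with hSdef
    have hSm : MeasurableSet S := hFm.inter
      (isClosed_le (contApply 0) continuous_const).measurableSet
    have hSfin : μH[1] S ≠ ⊤ := (hM_upper hp1 hε.le).ne
    have hSlow : ENNReal.ofReal ε ≤ μH[1] S := hM_lower hp0 hε.le
    have hconst : ∀ x ∈ S, (1:ℝ)/16 ≤ (ψ (2*ε) (x 0))^2 := by
      rintro x ⟨hxf, hxε⟩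
      have hxε' : x 0 ≤ ε := hxε
      have h14 : (1:ℝ)/4 ≤ ψ (2*ε) (x 0) := ψ_ge_quarter ha (by linarith : x 0 ≤ 2*ε/2)
      nlinarith [ψ_nonneg (2*ε) (x 0)]
    have hIntS : IntegrableOn (fun x : E2 => (ψ (2*ε) (x 0))^2) S μH[1] :=
      hIntB.mono_set Set.inter_subset_left
    have h1 : (1:ℝ)/16 * (μH[1] S).toReal ≤ ∫ x in S, (ψ (2*ε) (x 0))^2 ∂μH[1] :=
      by have h := setIntegral_ge_of_const_le hSm hSfin hconst hIntS
         rw [smul_eq_mul, mul_comm] at h; exact h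
    have h2 : ε ≤ (μH[1] S).toReal := by
      have := ENNReal.toReal_mono hSfin hSlow
      rwa [ENNReal.toReal_ofReal hε.le] at this
    have h3 : ∫ x in S, (ψ (2*ε) (x 0))^2 ∂μH[1]
        ≤ ∫ x in frontier (cuspDomain p), (ψ (2*ε) (x 0))^2 ∂μH[1] :=
      setIntegral_mono_set hIntB (Eventually.of_forall (fun x => sq_nonneg _))
        (HasSubset.Subset.eventuallyLE Set.inter_subset_left)
    calc ε/16 = 1/16 * ε := by ring
    _ ≤ 1/16 * (μH[1] S).toReal := by linarith
    _ ≤ ∫ x in S, (ψ (2*ε) (x 0))^2 ∂μH[1] := h1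
    _ ≤ _ := h3
  exact ⟨hcv, hdiff, hcg, hIntD, hDpos, hIntA, hIntB, hA, hD, hB⟩

end main

end S16

open S16 in
/-- For the cusp domain `Υ_p` with `1 < p < 2`, there are `C > 0` and `γ₀ > 0` such
that for `γ ≥ γ₀` some admissible test function has Rayleigh quotient
`≤ -C γ^{2/(2-p)}`; in particular `Λ(Υ_p;γ) ≤ -C γ^{2/(2-p)}`. -/
theorem stmt16 (p : ℝ) (hp1 : 1 < p) (hp2 : p < 2) :
    ∃ C : ℝ, 0 < C ∧ ∃ γ₀ : ℝ, 0 < γ₀ ∧ ∀ γ : ℝ, γ₀ ≤ γ →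
      (∃ v, Admissible (cuspDomain p) v ∧
        RQ (cuspDomain p) γ v ≤ -C * γ ^ (2 / (2 - p))) ∧
      principalEV (cuspDomain p) γ ≤ ((-C * γ ^ (2 / (2 - p)) : ℝ) : EReal) := by
  have h2p : (0:ℝ) < 2 - p := by linarith
  set K : ℝ := (512:ℝ) ^ ((2-p)⁻¹) with hKdef
  have hKpos : 0 < K := Real.rpow_pos_of_pos (by norm_num) _
  refine ⟨(16*K^2)⁻¹, by positivity, 1, one_pos, ?_⟩
  intro γ hγ
  have hγ0 : (0:ℝ) < γ := lt_of_lt_of_le one_pos hγ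
  set ε : ℝ := K * γ ^ (-(2-p)⁻¹) with hεdef
  have hεpos : 0 < ε := mul_pos hKpos (Real.rpow_pos_of_pos hγ0 _)
  obtain ⟨hcv, hdiff, hcg, hIntD, hDpos, hIntA, hIntB, hAb, hDb, hBb⟩ :=
    main_bounds hp1 hp2 hεpos
  set v : E2 → ℝ := fun x => ψ (2*ε) (x 0) with hvdef
  have hμH : (μH[((2:ℕ):ℝ) - 1] : Measure E2) = μH[1] := by norm_num
  -- admissibility
  have hadm : Admissible (cuspDomain p) v := by
    refine ⟨hcv.continuousOn, fun x _ => hdiff x, hcg.continuousOn, hIntD, hDpos, hIntA, ?_⟩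
    rw [hμH]
    exact hIntB
  -- key rpow identities
  have hKr : K ^ (2-p) = 512 := by
    rw [hKdef, ← Real.rpow_mul (by norm_num : (0:ℝ) ≤ 512), inv_mul_cancel₀ h2p.ne',
      Real.rpow_one]
  have hεr : ε ^ (2-p) = 512 / γ := by
    rw [hεdef, Real.mul_rpow hKpos.le (Real.rpow_pos_of_pos hγ0 _).le, hKr,
      ← Real.rpow_mul hγ0.le]
    rw [show -(2-p)⁻¹ * (2-p) = -1 by field_simp]
    rw [Real.rpow_neg_one]
    ring
  have hε2 : ε ^ (2:ℝ) = K^2 / γ ^ (2/(2-p)) := by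
    rw [hεdef, Real.mul_rpow hKpos.le (Real.rpow_pos_of_pos hγ0 _).le,
      ← Real.rpow_mul hγ0.le]
    rw [show -(2-p)⁻¹ * 2 = -(2/(2-p)) by field_simp]
    rw [Real.rpow_neg hγ0.le, Real.rpow_two]
    field_simp
  have hεsq : ε ^ (2:ℝ) = ε^2 := Real.rpow_two ε
  have hγq_pos : 0 < γ ^ (2/(2-p)) := Real.rpow_pos_of_pos hγ0 _
  have hγq : γ ^ (2/(2-p)) = K^2 / ε^2 := by
    rw [← hεsq, hε2]
    field_simp
  -- real quantities
  set A : ℝ := ∫ x in cuspDomain p, ‖gradient (fun y : E2 => ψ (2*ε) (y 0)) x‖^2 with hAdef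
  set B : ℝ := ∫ x in frontier (cuspDomain p), (ψ (2*ε) (x 0))^2 ∂μH[1] with hBdef
  set D : ℝ := ∫ x in cuspDomain p, (ψ (2*ε) (x 0))^2 with hDdef
  have hrp : (0:ℝ) < ε ^ p := Real.rpow_pos_of_pos hεpos p
  have hVb : 2*ε*(2*(2*ε)^p) ≤ 16 * ε * ε^p := by
    have h1 : (2*ε)^p = 2^p * ε^p := Real.mul_rpow (by norm_num) hεpos.le
    have h2 : (2:ℝ)^p ≤ 4 := by
      have := Real.rpow_le_rpow_of_exponent_le (by norm_num : (1:ℝ) ≤ 2) hp2.le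
      rwa [Real.rpow_two, (by norm_num : (2:ℝ)^2 = 4)] at this
    rw [h1]
    nlinarith [mul_le_mul_of_nonneg_right h2 (le_of_lt (mul_pos hεpos hrp))]
  have hA16 : A ≤ 16 * (ε^p / ε) := by
    have := hAb.trans (mul_le_mul_of_nonneg_left hVb (by positivity : (0:ℝ) ≤ (1/ε)^2))
    calc A ≤ (1/ε)^2 * (16 * ε * ε^p) := this
    _ = 16 * (ε^p / ε) := by field_simp
  have hD16 : D ≤ 16 * ε * ε^p := hDb.trans hVb
  have hγε : γ * ε = 512 * (ε^p / ε) := by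
    have h1 : ε = ε ^ (2-p) * ε ^ (p-1) := by
      rw [← Real.rpow_add hεpos]
      norm_num
    have h2 : ε ^ (p-1) = ε^p / ε := by
      rw [Real.rpow_sub hεpos, Real.rpow_one]
    calc γ * ε = (γ * ε ^ (2-p)) * ε ^ (p-1) := by rw [mul_assoc, ← h1]
    _ = 512 * (ε^p / ε) := by rw [hεr, h2]; field_simp
  have hγB : 32 * (ε^p / ε) ≤ γ * B := by
    have h1 : γ * (ε/16) ≤ γ * B := mul_le_mul_of_nonneg_left hBb hγ0.le
    calc 32 * (ε^p / ε) = (512 * (ε^p / ε))/16 := by ring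
    _ = γ * ε / 16 := by rw [hγε]
    _ = γ * (ε/16) := by ring
    _ ≤ γ * B := h1
  -- the key numeric inequality
  have hkey : A - γ * B ≤ (-(16*K^2)⁻¹ * γ ^ (2/(2-p))) * D := by
    have hC : (-(16*K^2)⁻¹ * γ ^ (2/(2-p))) = -(1/(16*ε^2)) := by
      rw [hγq]
      field_simp
    rw [hC]
    have hDpos' : (0:ℝ) < D := hDpos
    have h1 : A - γ * B ≤ -16 * (ε^p/ε) := by
      have := hA16
      linarith [hγB]
    have h2 : (-(1/(16*ε^2))) * (16 * ε * ε^p) = -(ε^p/ε) := by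
      field_simp
    have h3 : (-(1/(16*ε^2))) * D ≥ (-(1/(16*ε^2))) * (16 * ε * ε^p) := by
      apply mul_le_mul_of_nonpos_left hD16
      have : (0:ℝ) < 1/(16*ε^2) := by positivity
      linarith
    rw [h2] at h3
    have h4 : -16 * (ε^p/ε) ≤ -(ε^p/ε) := by
      have : (0:ℝ) < ε^p/ε := by positivity
      linarith
    linarith
  have hRQ : RQ (cuspDomain p) γ v = (A - γ * B) / D := by
    rw [RQ, hμH]
  have hRQle : RQ (cuspDomain p) γ v ≤ -(16*K^2)⁻¹ * γ ^ (2/(2-p)) := by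
    rw [hRQ, div_le_iff₀ hDpos]
    exact hkey
  refine ⟨⟨v, hadm, hRQle⟩, ?_⟩
  calc principalEV (cuspDomain p) γ ≤ ((RQ (cuspDomain p) γ v : ℝ) : EReal) :=
        sInf_le ⟨v, hadm, rfl⟩
  _ ≤ ((-(16*K^2)⁻¹ * γ ^ (2/(2-p)) : ℝ) : EReal) := by
        exact_mod_cast hRQle


end
end

section
/- Let p ≥ 2 and let Υ_p := { (x, y) ∈ ℝ² : x > 0, |y| < x^p } be a planar domain with an outward-pointing cusp at the origin. Then for every N > 0 there exist a constant C > 0 and γ₀ > 0 such that for every γ ≥ γ₀ there is a function v admissible for Υ_p with J(v; γ, Υ_p) ≤ −C γ^N. In particular, Λ(Υ_p; γ) ≤ −C γ^N for all γ ≥ γ₀. -/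
open MeasureTheory Real Filter Topology

noncomputable section

/-! ### Auxiliary material for the proof -/

namespace Stmt17Aux

/-- auxiliary: `q u = (max u 0)^2`, a `C¹` function. -/
def qfun (u : ℝ) : ℝ := (max u 0) ^ 2

lemma qfun_hasDerivAt (u : ℝ) : HasDerivAt qfun (2 * max u 0) u := by
  rcases lt_trichotomy u 0 with hu | hu | hu
  · have h0 : qfun =ᶠ[nhds u] fun _ => (0:ℝ) := by
      filter_upwards [eventually_lt_nhds hu] with t ht
      simp [qfun, max_eq_right ht.le]
    have : HasDerivAt (fun _ : ℝ => (0:ℝ)) 0 u := hasDerivAt_const u 0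
    simpa [max_eq_right hu.le] using this.congr_of_eventuallyEq h0
  · subst hu
    rw [hasDerivAt_iff_tendsto_slope]
    simp only [max_self, mul_zero]
    have hb : ∀ t : ℝ, ‖slope qfun 0 t‖ ≤ ‖t‖ := by
      intro t
      have : slope qfun 0 t = (max t 0)^2 / t := by
        simp [slope, qfun, div_eq_inv_mul]
      rw [this]
      rcases le_or_gt t 0 with h | h
      · simp [max_eq_right h]
      · rw [max_eq_left h.le, sq, mul_div_assoc, div_self h.ne', mul_one]
    have ht : Tendsto (fun t : ℝ => ‖t‖) (nhdsWithin 0 {(0:ℝ)}ᶜ) (nhds 0) := by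
      simpa using (continuous_norm.tendsto (0:ℝ)).mono_left nhdsWithin_le_nhds
    exact squeeze_zero_norm hb ht
  · have h0 : qfun =ᶠ[nhds u] fun t => t^2 := by
      filter_upwards [eventually_gt_nhds hu] with t ht
      simp [qfun, max_eq_left ht.le]
    have : HasDerivAt (fun t : ℝ => t^2) (2*u) u := by
      simpa using (hasDerivAt_pow 2 u)
    simpa [max_eq_left hu.le] using this.congr_of_eventuallyEq h0

/-- The bump profile `ψ s = ((1-s²)⁺)²`. -/
def psiB (s : ℝ) : ℝ := qfun (1 - s ^ 2)

/-- Its derivative. -/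
def psiD (s : ℝ) : ℝ := 2 * max (1 - s ^ 2) 0 * (-(2 * s))

lemma psiB_hasDerivAt (s : ℝ) : HasDerivAt psiB (psiD s) s := by
  have h1 : HasDerivAt (fun s : ℝ => 1 - s ^ 2) (-(2 * s)) s := by
    simpa using (hasDerivAt_pow 2 s).const_sub 1
  exact (qfun_hasDerivAt (1 - s ^ 2)).comp s h1

lemma psiB_nonneg (s : ℝ) : 0 ≤ psiB s := sq_nonneg _

lemma psiB_le_one (s : ℝ) : psiB s ≤ 1 := by
  have h : max (1 - s ^ 2) 0 ≤ 1 := by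
    apply max_le (by nlinarith [sq_nonneg s]) zero_le_one
  have h0 : 0 ≤ max (1 - s ^ 2) 0 := le_max_right _ _
  calc (max (1 - s^2) 0)^2 ≤ 1^2 := by nlinarith
  _ = 1 := one_pow 2

lemma psiB_eq_zero {s : ℝ} (h : 1 ≤ |s|) : psiB s = 0 := by
  have : 1 - s ^ 2 ≤ 0 := by nlinarith [sq_abs s]
  simp [psiB, qfun, max_eq_right this]

lemma psiB_ne_zero_imp {s : ℝ} (h : psiB s ≠ 0) : |s| < 1 := by
  by_contra hc
  exact h (psiB_eq_zero (not_lt.1 hc))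

lemma psiB_pos {s : ℝ} (h : |s| < 1) : 0 < psiB s := by
  have h2 : 0 < 1 - s ^ 2 := by nlinarith [sq_abs s, abs_nonneg s]
  have : max (1 - s ^ 2) 0 = 1 - s ^ 2 := max_eq_left h2.le
  unfold psiB qfun
  rw [this]
  positivity

lemma psiD_ne_zero_imp {s : ℝ} (h : psiD s ≠ 0) : |s| < 1 := by
  by_contra hc
  push_neg at hc
  have : 1 - s ^ 2 ≤ 0 := by nlinarith [sq_abs s]
  simp [psiD, max_eq_right this] at h

lemma psiB_half {s : ℝ} (h : |s| ≤ 1/4) : 1/2 ≤ psiB s := by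
  have hs2 : s ^ 2 ≤ 1/16 := by nlinarith [sq_abs s, abs_nonneg s]
  have : 15/16 ≤ 1 - s ^ 2 := by linarith
  have hm : 15/16 ≤ max (1 - s ^ 2) 0 := le_trans this (le_max_left _ _)
  have : (15/16 : ℝ)^2 ≤ (max (1 - s ^ 2) 0)^2 := by nlinarith
  unfold psiB qfun; nlinarith

lemma psiD_abs_le (s : ℝ) : |psiD s| ≤ 4 := by
  rcases le_or_gt (1 - s ^ 2) 0 with h | h
  · simp [psiD, max_eq_right h]
  · have hs : |s| ≤ 1 := by nlinarith [sq_abs s, abs_nonneg s]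
    rw [psiD, max_eq_left h.le, abs_mul, abs_mul, abs_neg, abs_mul]
    have h1 : |1 - s ^ 2| ≤ 1 := by rw [abs_of_pos h]; nlinarith [sq_nonneg s]
    simp only [abs_two, Nat.abs_ofNat]
    nlinarith [abs_nonneg (1 - s^2), abs_nonneg s]

lemma psiB_continuous : Continuous psiB := by
  unfold psiB qfun
  fun_prop

lemma psiD_continuous : Continuous psiD := by
  unfold psiD
  fun_prop

/-! ### Euclidean plane helpers -/

abbrev E2 := EuclideanSpace ℝ (Fin 2)

def ee0 : E2 := EuclideanSpace.single 0 1
def ee1 : E2 := EuclideanSpace.single 1 1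

lemma toDual_ee0 : (InnerProductSpace.toDual ℝ E2) ee0 = EuclideanSpace.proj (0 : Fin 2) := by
  ext y
  simp [ee0, InnerProductSpace.toDual_apply_apply, EuclideanSpace.inner_single_left]

lemma bump_hasGradientAt (a b : ℝ) (z : E2) :
    HasGradientAt (fun z : E2 => psiB (a * z 0 - b)) ((a * psiD (a * z 0 - b)) • ee0) z := by
  rw [hasGradientAt_iff_hasFDerivAt]
  have hlin : HasFDerivAt (fun z : E2 => a * z 0 - b)
      (a • (EuclideanSpace.proj (0 : Fin 2) : E2 →L[ℝ] ℝ)) z :=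
    (((EuclideanSpace.proj (0 : Fin 2) : E2 →L[ℝ] ℝ).hasFDerivAt (x := z)).const_mul a).sub_const b
  have h := (psiB_hasDerivAt (a * z 0 - b)).comp_hasFDerivAt z hlin
  have heq : (InnerProductSpace.toDual ℝ E2) ((a * psiD (a * z 0 - b)) • ee0)
      = psiD (a * z 0 - b) • (a • (EuclideanSpace.proj (0 : Fin 2) : E2 →L[ℝ] ℝ)) := by
    rw [_root_.map_smul, toDual_ee0, smul_smul, mul_comm]
  rw [heq]
  exact h

lemma pt_eq (z : E2) : z = (z 0) • ee0 + (z 1) • ee1 := by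
  ext i
  fin_cases i <;> simp [ee0, ee1, EuclideanSpace.single_apply]

lemma proj_lip : LipschitzWith 1 (fun z : E2 => z 0) := by
  apply LipschitzWith.of_dist_le_mul
  intro z w
  rw [NNReal.coe_one, one_mul]
  rw [EuclideanSpace.dist_eq z w, Real.dist_eq]
  have h1 : |z 0 - w 0| = Real.sqrt (|z 0 - w 0|^2) := by
    rw [Real.sqrt_sq_eq_abs, abs_abs]
  rw [h1]
  apply Real.sqrt_le_sqrt
  rw [sq_abs]
  have : (z 0 - w 0)^2 = (dist (z 0) (w 0))^2 := by rw [Real.dist_eq, sq_abs]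
  rw [this]
  exact Finset.single_le_sum (f := fun i => dist (z i) (w i) ^ 2)
    (fun i _ => sq_nonneg _) (Finset.mem_univ 0)

lemma box_volume (a b c d : ℝ) :
    (volume {z : E2 | z 0 ∈ Set.Icc a b ∧ z 1 ∈ Set.Icc c d}) =
      ENNReal.ofReal (b - a) * ENNReal.ofReal (d - c) := by
  have hpre : {z : E2 | z 0 ∈ Set.Icc a b ∧ z 1 ∈ Set.Icc c d} =
      (MeasurableEquiv.toLp 2 (Fin 2 → ℝ)).symm ⁻¹'
        (Set.univ.pi fun i : Fin 2 => Set.Icc (![a,c] i) (![b,d] i)) := by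
    ext z
    simp only [Set.mem_preimage, Set.mem_pi, Set.mem_univ, forall_true_left, Set.mem_setOf_eq]
    constructor
    · rintro ⟨h0, h1⟩ i
      fin_cases i <;> simp [MeasurableEquiv.coe_toLp_symm, h0, h1]
    · intro h
      have h0 := h 0
      have h1 := h 1
      simp [MeasurableEquiv.coe_toLp_symm] at h0 h1
      exact ⟨h0, h1⟩
  have hmp := (EuclideanSpace.volume_preserving_symm_measurableEquiv_toLp (Fin 2)).measure_preimage
    (s := Set.univ.pi fun i : Fin 2 => Set.Icc (![a,c] i) (![b,d] i))
    ((MeasurableSet.univ_pi (fun i => measurableSet_Icc)).nullMeasurableSet)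
  rw [hpre, hmp, volume_pi_pi, Fin.prod_univ_two]
  simp [Real.volume_Icc]

lemma cont0 : Continuous (fun z : E2 => z 0) :=
  (EuclideanSpace.proj (0 : Fin 2) (𝕜 := ℝ)).continuous

lemma cont1 : Continuous (fun z : E2 => z 1) :=
  (EuclideanSpace.proj (1 : Fin 2) (𝕜 := ℝ)).continuous

lemma cont_rpow {p : ℝ} (hp0 : 0 ≤ p) : Continuous (fun x : ℝ => x ^ p) := by
  rw [continuous_iff_continuousAt]
  exact fun x => Real.continuousAt_rpow_const x p (Or.inr hp0)

lemma cusp_open {p : ℝ} (hp0 : 0 ≤ p) : IsOpen (cuspDomain p) := by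
  have h1 : IsOpen {z : E2 | 0 < z 0} := isOpen_lt continuous_const cont0
  have h2 : IsOpen {z : E2 | |z 1| < (z 0) ^ p} :=
    isOpen_lt (continuous_abs.comp cont1) ((cont_rpow hp0).comp cont0)
  exact h1.inter h2

lemma cusp_closure_subset {p : ℝ} (hp0 : 0 ≤ p) :
    closure (cuspDomain p) ⊆ {z : E2 | 0 ≤ z 0 ∧ |z 1| ≤ (z 0) ^ p} := by
  apply closure_minimal
  · rintro z ⟨h1, h2⟩; exact ⟨h1.le, h2.le⟩
  · exact (isClosed_le continuous_const cont0).inter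
      (isClosed_le (continuous_abs.comp cont1) ((cont_rpow hp0).comp cont0))

lemma cusp_frontier_subset {p : ℝ} (hp0 : 0 ≤ p) :
    ∀ z ∈ frontier (cuspDomain p), 0 < z 0 → |z 1| = (z 0) ^ p := by
  intro z hz h0
  rw [(cusp_open hp0).frontier_eq] at hz
  obtain ⟨hc, hn⟩ := hz
  have h2 := (cusp_closure_subset hp0 hc).2
  rcases lt_or_eq_of_le h2 with h | h
  · exact absurd ⟨h0, h⟩ hn
  · exact h

lemma mem_frontier_curve {p : ℝ} (hp0 : 0 < p) {x : ℝ} (hx : 0 < x) :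
    (x • ee0 + (x ^ p) • ee1) ∈ frontier (cuspDomain p) := by
  have hco0 : (x • ee0 + (x ^ p) • ee1) 0 = x := by simp [ee0, ee1, EuclideanSpace.single_apply]
  have hco1 : (x • ee0 + (x ^ p) • ee1) 1 = x ^ p := by simp [ee0, ee1, EuclideanSpace.single_apply]
  have hxp : 0 < x ^ p := Real.rpow_pos_of_pos hx p
  rw [(cusp_open hp0.le).frontier_eq]
  constructor
  · have hseq : Tendsto (fun n : ℕ => x • ee0 + ((1 - 1/(n+1)) * x ^ p) • ee1) atTop
        (nhds (x • ee0 + (x ^ p) • ee1)) := by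
      have h1 : Tendsto (fun n : ℕ => (1 - 1/(n+1)) * x ^ p) atTop (nhds (x ^ p)) := by
        have := tendsto_one_div_add_atTop_nhds_zero_nat (𝕜 := ℝ)
        have h2 : Tendsto (fun n : ℕ => 1 - 1/((n:ℝ)+1)) atTop (nhds 1) := by
          simpa using (tendsto_const_nhds (x := (1:ℝ))).sub this
        simpa using h2.mul_const (x ^ p)
      exact tendsto_const_nhds.add (h1.smul_const ee1)
    apply mem_closure_of_tendsto hseq
    filter_upwards with n
    have hn1 : 0 < ((n:ℝ)+1) := by positivity
    have hlt : (1 - 1/((n:ℝ)+1)) * x ^ p < x ^ p := by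
      have : (0:ℝ) < 1/((n:ℝ)+1) := by positivity
      nlinarith
    have hge : 0 ≤ (1 - 1/((n:ℝ)+1)) * x ^ p := by
      have : 1/((n:ℝ)+1) ≤ 1 := by
        rw [div_le_one hn1]; linarith
      nlinarith
    refine ⟨by simpa [ee0, ee1, EuclideanSpace.single_apply] using hx, ?_⟩
    have hco0' : (x • ee0 + ((1 - 1/((n:ℝ)+1)) * x ^ p) • ee1) 0 = x := by
      simp [ee0, ee1, EuclideanSpace.single_apply]
    have hco1' : (x • ee0 + ((1 - 1/((n:ℝ)+1)) * x ^ p) • ee1) 1 = (1 - 1/((n:ℝ)+1)) * x ^ p := by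
      simp [ee0, ee1, EuclideanSpace.single_apply]
    rw [hco0', hco1', abs_of_nonneg hge]
    exact hlt
  · rintro ⟨-, habs⟩
    rw [hco0, hco1, abs_of_nonneg hxp.le] at habs
    exact lt_irrefl _ habs

lemma curve_lip {p σ ε : ℝ} (hp : 2 ≤ p) (hσ : |σ| = 1) (hε : 0 < ε) (hε1 : 2*ε ≤ 1) :
    LipschitzOnWith (1+p).toNNReal (fun x : ℝ => x • ee0 + (σ * x ^ p) • ee1)
      (Set.Icc ε (2*ε)) := by
  apply Convex.lipschitzOnWith_of_nnnorm_hasDerivWithin_le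
    (f' := fun x => ee0 + (σ * (p * x ^ (p-1))) • ee1) (convex_Icc ε (2*ε))
  · intro x hx
    have hx0 : 0 < x := lt_of_lt_of_le hε hx.1
    have h0 : HasDerivAt (fun x : ℝ => x • ee0) ((1:ℝ) • ee0) x := (hasDerivAt_id x).smul_const ee0
    have hr : HasDerivAt (fun x : ℝ => x ^ p) (p * x ^ (p-1)) x :=
      Real.hasDerivAt_rpow_const (Or.inl hx0.ne')
    have h1 := ((hr.const_mul σ).smul_const ee1)
    have h2 := (h0.add h1).hasDerivWithinAt (s := Set.Icc ε (2*ε))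
    rw [one_smul] at h2
    exact h2
  · intro x hx
    have hx0 : 0 < x := lt_of_lt_of_le hε hx.1
    have hx1 : x ≤ 1 := le_trans hx.2 hε1
    have hpow : x ^ (p-1) ≤ 1 :=
      Real.rpow_le_one hx0.le hx1 (by linarith)
    have hnorm : ‖ee0 + (σ * (p * x ^ (p-1))) • ee1‖ ≤ 1 + p := by
      calc ‖ee0 + (σ * (p * x ^ (p-1))) • ee1‖
          ≤ ‖ee0‖ + ‖(σ * (p * x ^ (p-1))) • ee1‖ := norm_add_le _ _
      _ = 1 + |σ * (p * x ^ (p-1))| := by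
          rw [norm_smul]
          simp [ee0, ee1, EuclideanSpace.norm_single, Real.norm_eq_abs]
      _ ≤ 1 + p := by
          have hp0 : (0:ℝ) ≤ p := by linarith
          have h1 : |p| = p := abs_of_nonneg hp0
          have h2 : |x ^ (p-1)| = x ^ (p-1) := abs_of_nonneg (Real.rpow_nonneg hx0.le _)
          have h3 : |σ * (p * x ^ (p-1))| = |σ| * (|p| * |x ^ (p-1)|) := by
            rw [abs_mul, abs_mul]
          rw [h3, hσ, one_mul, h1, h2]
          nlinarith [Real.rpow_nonneg hx0.le (p-1)]
    rw [← NNReal.coe_le_coe, coe_nnnorm, Real.coe_toNNReal _ (by linarith : (0:ℝ) ≤ 1 + p)]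
    exact hnorm

lemma curve_image_measure {p σ ε : ℝ} (hp : 2 ≤ p) (hσ : |σ| = 1) (hε : 0 < ε) (hε1 : 2*ε ≤ 1) :
    μH[1] ((fun x : ℝ => x • ee0 + (σ * x ^ p) • ee1) '' Set.Icc ε (2*ε)) ≤
      ENNReal.ofReal ((1+p) * ε) := by
  have h := (curve_lip hp hσ hε hε1).hausdorffMeasure_image_le (d := 1) zero_le_one
  rw [MeasureTheory.hausdorffMeasure_real] at h
  refine le_trans h ?_
  rw [ENNReal.rpow_one, Real.volume_Icc]
  have he : (2*ε - ε) = ε := by ring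
  rw [he, ENNReal.ofReal_mul (by linarith : (0:ℝ) ≤ 1+p)]
  gcongr
  rw [← ENNReal.ofReal_coe_nnreal, Real.coe_toNNReal _ (by linarith : (0:ℝ) ≤ 1+p)]


set_option maxHeartbeats 2000000 in
/-- Main estimate: for suitable `ε` the bump test function has very negative
Rayleigh quotient. -/
lemma key {p : ℝ} (hp : 2 ≤ p) {γ ε : ℝ} (hε0 : 0 < ε) (hε1 : 2*ε ≤ 1)
    (hγ : (2:ℝ) ^ (p+12) ≤ γ) :
    ∃ v : E2 → ℝ, Admissible (cuspDomain p) v ∧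
      RQ (cuspDomain p) γ v ≤ -γ / (64 * (2*ε) ^ p) := by
  have hp0 : (0:ℝ) ≤ p := by linarith
  have hp1 : (0:ℝ) < p := by linarith
  have hγ1 : (1:ℝ) ≤ γ := by
    refine le_trans ?_ hγ
    calc (1:ℝ) = (2:ℝ) ^ (0:ℝ) := (Real.rpow_zero 2).symm
    _ ≤ (2:ℝ) ^ (p+12) := Real.rpow_le_rpow_of_exponent_le one_le_two (by linarith)
  have hγpos : (0:ℝ) < γ := lt_of_lt_of_le one_pos hγ1
  set Ω := cuspDomain p with hΩdef
  have hΩopen : IsOpen Ω := cusp_open hp0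
  have hΩmeas : MeasurableSet Ω := hΩopen.measurableSet
  set a : ℝ := 2/ε with hadef
  have ha : 0 < a := by positivity
  set v : E2 → ℝ := fun z => psiB (a * z 0 - 3) with hvdef
  set G : E2 → E2 := fun z => (a * psiD (a * z 0 - 3)) • ee0 with hGdef
  have hgrad : ∀ z, HasGradientAt v (G z) z := fun z => bump_hasGradientAt a 3 z
  have hgradeq : gradient v = G := gradient_eq hgrad
  have hεle1 : ε ≤ 1 := by linarith
  have haε : a * ε = 2 := by rw [hadef]; field_simp
  -- support facts
  have hsupp : ∀ z : E2, |a * z 0 - 3| < 1 → ε < z 0 ∧ z 0 < 2*ε := by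
    intro z hz
    obtain ⟨h1, h2⟩ := abs_lt.mp hz
    constructor
    · exact lt_of_mul_lt_mul_left (by nlinarith [haε] : a*ε < a*(z 0)) ha.le
    · exact lt_of_mul_lt_mul_left (by nlinarith [haε] : a*(z 0) < a*(2*ε)) ha.le
  have hsupp_v : ∀ z : E2, v z ≠ 0 → ε < z 0 ∧ z 0 < 2*ε :=
    fun z hz => hsupp z (psiB_ne_zero_imp hz)
  have hsupp_G : ∀ z : E2, G z ≠ 0 → ε < z 0 ∧ z 0 < 2*ε := by
    intro z hz
    apply hsupp z
    apply psiD_ne_zero_imp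
    intro hD
    apply hz
    rw [hGdef]
    simp [hD]
  -- box
  set box : Set E2 :=
    {z : E2 | z 0 ∈ Set.Icc ε (2*ε) ∧ z 1 ∈ Set.Icc (-((2*ε)^p)) ((2*ε)^p)} with hboxdef
  have hbox_meas : MeasurableSet box :=
    ((isClosed_Icc.preimage cont0).inter (isClosed_Icc.preimage cont1)).measurableSet
  set Dbar : ℝ := ε * (2*(2*ε)^p) with hDbardef
  have h2εp_pos : 0 < (2*ε)^p := Real.rpow_pos_of_pos (by linarith) p
  have hDbar_pos : 0 < Dbar := by positivity
  have hbox_vol : volume box = ENNReal.ofReal Dbar := by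
    rw [hboxdef, box_volume]
    rw [← ENNReal.ofReal_mul (by linarith : (0:ℝ) ≤ 2*ε - ε)]
    congr 1
    rw [hDbardef]; ring
  have hbox_fin : volume box < ⊤ := by rw [hbox_vol]; exact ENNReal.ofReal_lt_top
  have hΩbox : ∀ z ∈ Ω, ε ≤ z 0 → z 0 ≤ 2*ε → z ∈ box := by
    intro z hzΩ hz1 hz2
    refine ⟨⟨hz1, hz2⟩, ?_⟩
    have h3 : |z 1| < (z 0) ^ p := hzΩ.2
    have h4 : (z 0) ^ p ≤ (2*ε) ^ p :=
      Real.rpow_le_rpow (le_trans hε0.le hz1) hz2 hp0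
    have := lt_of_lt_of_le h3 h4
    exact abs_le.mp this.le
  -- indicator comparison function
  set g : E2 → ℝ := box.indicator (fun _ => (1:ℝ)) with hgdef
  have hg_nonneg : ∀ z, 0 ≤ g z := fun z => Set.indicator_nonneg (fun _ _ => zero_le_one) z
  have hg_int : Integrable g (volume.restrict Ω) := by
    rw [hgdef, integrable_indicator_iff hbox_meas]
    refine (integrableOn_const_iff (C := (1:ℝ))).mpr (Or.inr ?_)
    calc (volume.restrict Ω) box ≤ volume box := Measure.restrict_apply_le _ _
    _ < ⊤ := hbox_fin
  have hg_integral_le : ∫ z in Ω, g z ≤ Dbar := by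
    rw [hgdef, integral_indicator_const (1:ℝ) hbox_meas]
    rw [smul_eq_mul, mul_one]
    have h1 : (volume.restrict Ω) box ≤ ENNReal.ofReal Dbar := by
      rw [← hbox_vol]; exact Measure.restrict_apply_le _ _
    calc ((volume.restrict Ω) box).toReal ≤ (ENNReal.ofReal Dbar).toReal :=
      ENNReal.toReal_mono ENNReal.ofReal_ne_top h1
    _ = Dbar := ENNReal.toReal_ofReal hDbar_pos.le
  -- continuity
  have hlin_cont : Continuous (fun z : E2 => a * z 0 - 3) := by
    exact ((continuous_const.mul cont0).sub continuous_const)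
  have hv_cont : Continuous v := psiB_continuous.comp hlin_cont
  have hG_cont : Continuous G := by
    rw [hGdef]
    exact (continuous_const.mul (psiD_continuous.comp hlin_cont)).smul continuous_const
  -- v² ≤ g on Ω
  have hv_le_g : ∀ z ∈ Ω, v z ^ 2 ≤ g z := by
    intro z hz
    by_cases hvz : v z = 0
    · rw [hvz]; simpa using hg_nonneg z
    · obtain ⟨h1, h2⟩ := hsupp_v z hvz
      have hzbox : z ∈ box := hΩbox z hz h1.le h2.le
      rw [hgdef, Set.indicator_of_mem hzbox]
      have := psiB_le_one (a * z 0 - 3)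
      have := psiB_nonneg (a * z 0 - 3)
      rw [hvdef]
      nlinarith
  have hD_int : IntegrableOn (fun z => v z ^ 2) Ω volume := by
    apply Integrable.mono' hg_int ((hv_cont.pow 2).aestronglyMeasurable)
    rw [ae_restrict_iff' hΩmeas]
    filter_upwards with z hz
    rw [Real.norm_eq_abs, abs_of_nonneg (sq_nonneg _)]
    exact hv_le_g z hz
  have hD_le : ∫ z in Ω, v z ^ 2 ≤ Dbar := by
    calc ∫ z in Ω, v z ^ 2 ≤ ∫ z in Ω, g z :=
      setIntegral_mono_on hD_int hg_int hΩmeas hv_le_g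
    _ ≤ Dbar := hg_integral_le
  have hD_pos : 0 < ∫ z in Ω, v z ^ 2 := by
    rw [setIntegral_pos_iff_support_of_nonneg_ae
      (ae_of_all _ (fun z => sq_nonneg (v z))) hD_int]
    set W : Set E2 := ({z : E2 | ε < z 0} ∩ {z : E2 | z 0 < 2*ε}) ∩ Ω with hWdef
    have hWopen : IsOpen W :=
      (((isOpen_lt continuous_const cont0)).inter (isOpen_lt cont0 continuous_const)).inter hΩopen
    have hWsub : W ⊆ Function.support (fun z => v z ^ 2) ∩ Ω := by
      rintro z ⟨⟨h1, h2⟩, hzΩ⟩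
      refine ⟨?_, hzΩ⟩
      have he1 : a * ε < a * z 0 := mul_lt_mul_of_pos_left h1 ha
      have he2 : a * z 0 < a * (2*ε) := mul_lt_mul_of_pos_left h2 ha
      have habs : |a * z 0 - 3| < 1 := by
        rw [abs_lt]
        constructor <;> nlinarith [haε]
      have := psiB_pos habs
      simp only [Function.mem_support]
      rw [hvdef]
      positivity
    have hWne : W.Nonempty := by
      refine ⟨(3/2*ε) • ee0, ?_⟩
      have hc0 : ((3/2*ε) • ee0) 0 = 3/2*ε := by simp [ee0, EuclideanSpace.single_apply]
      have hc1 : ((3/2*ε) • ee0) 1 = 0 := by simp [ee0, EuclideanSpace.single_apply]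
      refine ⟨⟨?_, ?_⟩, ?_, ?_⟩
      · rw [Set.mem_setOf_eq, hc0]; linarith
      · rw [Set.mem_setOf_eq, hc0]; linarith
      · rw [hc0]; linarith
      · rw [hc0, hc1]
        simpa using Real.rpow_pos_of_pos (by linarith : (0:ℝ) < 3/2*ε) p
    calc (0:ENNReal) < volume W := hWopen.measure_pos volume hWne
    _ ≤ volume (Function.support (fun z => v z ^ 2) ∩ Ω) := measure_mono hWsub
  -- gradient bound
  have hnorm_ee0 : ‖ee0‖ = 1 := by
    simp [ee0, EuclideanSpace.norm_single]
  have hGnorm : ∀ z, ‖G z‖ = |a * psiD (a * z 0 - 3)| := by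
    intro z
    rw [hGdef]
    rw [norm_smul, hnorm_ee0, mul_one, Real.norm_eq_abs]
  have hG_le : ∀ z ∈ Ω, ‖G z‖ ^ 2 ≤ (64/ε^2) * g z := by
    intro z hz
    by_cases hGz : G z = 0
    · have h0 := hg_nonneg z
      have h1 : ‖G z‖ ^ 2 = 0 := by rw [hGz, norm_zero]; ring
      rw [h1]
      exact mul_nonneg (by positivity) h0
    · obtain ⟨h1, h2⟩ := hsupp_G z hGz
      have hzbox : z ∈ box := hΩbox z hz h1.le h2.le
      rw [hgdef, Set.indicator_of_mem hzbox, mul_one]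
      rw [hGnorm z, abs_mul, abs_of_pos ha]
      have hD4 := psiD_abs_le (a * z 0 - 3)
      have habs0 : 0 ≤ |psiD (a * z 0 - 3)| := abs_nonneg _
      have : a * |psiD (a * z 0 - 3)| ≤ a * 4 := mul_le_mul_of_nonneg_left hD4 ha.le
      have ha4 : (a * 4)^2 = 64/ε^2 := by
        rw [hadef]; field_simp; ring
      have hnn : 0 ≤ a * |psiD (a * z 0 - 3)| := mul_nonneg ha.le habs0
      calc (a * |psiD (a * z 0 - 3)|)^2 ≤ (a*4)^2 := by nlinarith
      _ = 64/ε^2 := ha4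
  have hA_int : IntegrableOn (fun z => ‖G z‖ ^ 2) Ω volume := by
    apply Integrable.mono' (hg_int.const_mul (64/ε^2))
      (((hG_cont.norm).pow 2).aestronglyMeasurable)
    rw [ae_restrict_iff' hΩmeas]
    filter_upwards with z hz
    rw [Real.norm_eq_abs, abs_of_nonneg (sq_nonneg _)]
    exact hG_le z hz
  have hA_le : ∫ z in Ω, ‖G z‖ ^ 2 ≤ (64/ε^2) * Dbar := by
    calc ∫ z in Ω, ‖G z‖ ^ 2 ≤ ∫ z in Ω, (64/ε^2) * g z :=
      setIntegral_mono_on hA_int (hg_int.const_mul (64/ε^2)) hΩmeas hG_le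
    _ = (64/ε^2) * ∫ z in Ω, g z := by rw [integral_const_mul]
    _ ≤ (64/ε^2) * Dbar := by
        apply mul_le_mul_of_nonneg_left hg_integral_le
        positivity
  -- boundary estimates
  set F : Set E2 := frontier Ω with hFdef
  have hF_meas : MeasurableSet F := isClosed_frontier.measurableSet
  set prj : E2 → ℝ := fun z => z 0 with hprjdef
  set T' : Set E2 := F ∩ prj ⁻¹' (Set.Icc ε (2*ε)) with hT'def
  have hT'sub : T' ⊆ ((fun x : ℝ => x • ee0 + ((1:ℝ) * x ^ p) • ee1) '' Set.Icc ε (2*ε)) ∪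
      ((fun x : ℝ => x • ee0 + ((-1:ℝ) * x ^ p) • ee1) '' Set.Icc ε (2*ε)) := by
    rintro z ⟨hzF, hzI⟩
    have hz0 : 0 < z 0 := lt_of_lt_of_le hε0 hzI.1
    have habs : |z 1| = (z 0) ^ p := cusp_frontier_subset hp0 z hzF hz0
    have hzp : (0:ℝ) ≤ (z 0) ^ p := Real.rpow_nonneg hz0.le p
    rcases abs_eq hzp |>.mp habs with h | h
    · left
      refine ⟨z 0, hzI, ?_⟩
      show z 0 • ee0 + ((1:ℝ) * (z 0) ^ p) • ee1 = z
      rw [one_mul, ← h]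
      exact (pt_eq z).symm
    · right
      refine ⟨z 0, hzI, ?_⟩
      show z 0 • ee0 + ((-1:ℝ) * (z 0) ^ p) • ee1 = z
      rw [neg_one_mul, ← h]
      exact (pt_eq z).symm
  have hT'le : μH[1] T' ≤ ENNReal.ofReal ((1+p)*ε) + ENNReal.ofReal ((1+p)*ε) := by
    refine le_trans (measure_mono hT'sub) (le_trans (measure_union_le _ _) ?_)
    gcongr
    · exact curve_image_measure hp (by norm_num) hε0 hε1
    · exact curve_image_measure hp (by norm_num) hε0 hε1
  have hT'fin : μH[1] T' < ⊤ :=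
    lt_of_le_of_lt hT'le (by finiteness)
  set I : Set ℝ := Set.Icc (11/8*ε) (13/8*ε) with hIdef
  set T : Set E2 := F ∩ prj ⁻¹' I with hTdef
  have hTsubT' : T ⊆ T' := by
    rintro z ⟨hzF, hzI⟩
    exact ⟨hzF, ⟨by linarith [hzI.1], by linarith [hzI.2]⟩⟩
  have hTfin : μH[1] T < ⊤ := lt_of_le_of_lt (measure_mono hTsubT') hT'fin
  have hT_ge : ENNReal.ofReal (ε/4) ≤ μH[1] T := by
    have h1 : I ⊆ prj '' T := by
      intro x hxI
      have hx0 : 0 < x := lt_of_lt_of_le (by linarith) hxI.1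
      refine ⟨x • ee0 + (x ^ p) • ee1, ⟨mem_frontier_curve hp1 hx0, ?_⟩, ?_⟩
      · show (x • ee0 + (x ^ p) • ee1) 0 ∈ I
        have : (x • ee0 + (x ^ p) • ee1) 0 = x := by
          simp [ee0, ee1, EuclideanSpace.single_apply]
        rw [this]; exact hxI
      · simp [hprjdef, ee0, ee1, EuclideanSpace.single_apply]
    have h2 : μH[1] (prj '' T) ≤ μH[1] T := by
      have := proj_lip.hausdorffMeasure_image_le (d := 1) zero_le_one T
      simpa using this
    calc ENNReal.ofReal (ε/4) = volume I := by
          rw [hIdef, Real.volume_Icc]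
          congr 1
          ring
    _ = μH[1] I := by rw [MeasureTheory.hausdorffMeasure_real]
    _ ≤ μH[1] (prj '' T) := measure_mono h1
    _ ≤ μH[1] T := h2
  have hT_toReal : ε/4 ≤ (μH[1] T).toReal := by
    have := ENNReal.toReal_mono hTfin.ne hT_ge
    rwa [ENNReal.toReal_ofReal (by positivity)] at this
  -- boundary integrability
  have hpreIcc_meas : MeasurableSet (prj ⁻¹' (Set.Icc ε (2*ε))) :=
    (isClosed_Icc.preimage cont0).measurableSet
  have hpreI_meas : MeasurableSet (prj ⁻¹' I) :=
    (isClosed_Icc.preimage cont0).measurableSet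
  have hrest1 : (μH[1].restrict F) (prj ⁻¹' (Set.Icc ε (2*ε))) = μH[1] T' := by
    rw [Measure.restrict_apply hpreIcc_meas, Set.inter_comm]
  have hrest2 : (μH[1].restrict F) (prj ⁻¹' I) = μH[1] T := by
    rw [Measure.restrict_apply hpreI_meas, Set.inter_comm]
  have hind_int : Integrable ((prj ⁻¹' (Set.Icc ε (2*ε))).indicator fun _ => (1:ℝ))
      (μH[1].restrict F) := by
    rw [integrable_indicator_iff hpreIcc_meas]
    refine (integrableOn_const_iff (C := (1:ℝ))).mpr (Or.inr ?_)
    rw [hrest1]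
    exact hT'fin
  have hB_int : IntegrableOn (fun z => v z ^ 2) F μH[1] := by
    apply Integrable.mono' hind_int ((hv_cont.pow 2).aestronglyMeasurable)
    filter_upwards with z
    rw [Real.norm_eq_abs, abs_of_nonneg (sq_nonneg _)]
    show v z ^ 2 ≤ _
    by_cases hvz : v z = 0
    · rw [hvz]
      simpa using Set.indicator_nonneg (fun _ _ => zero_le_one) z
    · obtain ⟨h1, h2⟩ := hsupp_v z hvz
      rw [Set.indicator_of_mem (by exact ⟨h1.le, h2.le⟩ : z ∈ prj ⁻¹' (Set.Icc ε (2*ε)))]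
      have := psiB_le_one (a * z 0 - 3)
      have := psiB_nonneg (a * z 0 - 3)
      rw [hvdef]
      nlinarith
  have hlo_int : Integrable ((prj ⁻¹' I).indicator fun _ => (1/4:ℝ)) (μH[1].restrict F) := by
    rw [integrable_indicator_iff hpreI_meas]
    refine (integrableOn_const_iff (C := (1/4:ℝ))).mpr (Or.inr ?_)
    rw [hrest2]
    exact hTfin
  have hB_ge : ε/16 ≤ ∫ z in F, v z ^ 2 ∂μH[1] := by
    have hle : ∀ z, (prj ⁻¹' I).indicator (fun _ => (1/4:ℝ)) z ≤ v z ^ 2 := by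
      intro z
      by_cases hz : z ∈ prj ⁻¹' I
      · rw [Set.indicator_of_mem hz]
        have hz0 : 11/8*ε ≤ z 0 := hz.1
        have hz0' : z 0 ≤ 13/8*ε := hz.2
        have he1 : a * (11/8*ε) ≤ a * z 0 := mul_le_mul_of_nonneg_left hz0 ha.le
        have he2 : a * z 0 ≤ a * (13/8*ε) := mul_le_mul_of_nonneg_left hz0' ha.le
        have habs : |a * z 0 - 3| ≤ 1/4 := by
          rw [abs_le]
          constructor <;> nlinarith [haε]
        have := psiB_half habs
        rw [hvdef]
        nlinarith
      · rw [Set.indicator_of_notMem hz]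
        exact sq_nonneg _
    have h1 : ∫ z in F, (prj ⁻¹' I).indicator (fun _ => (1/4:ℝ)) z ∂μH[1]
        ≤ ∫ z in F, v z ^ 2 ∂μH[1] := integral_mono hlo_int hB_int hle
    have h2 : ∫ z in F, (prj ⁻¹' I).indicator (fun _ => (1/4:ℝ)) z ∂μH[1]
        = (μH[1] T).toReal * (1/4) := by
      rw [integral_indicator_const (1/4:ℝ) hpreI_meas, measureReal_def, hrest2, smul_eq_mul]
    rw [h2] at h1
    refine le_trans ?_ h1
    nlinarith
  -- gather the final estimates
  have hidx : ((2:ℕ):ℝ) - 1 = 1 := by norm_num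
  have hμeq : (μH[((2:ℕ):ℝ) - 1] : Measure E2) = μH[1] := by rw [hidx]
  have hg2 : (fun z : E2 => ‖gradient v z‖ ^ 2) = fun z => ‖G z‖ ^ 2 := by
    funext z; rw [hgradeq]
  have hgradcont : ContinuousOn (fun z : E2 => gradient v z) Ω := by
    have : (fun z : E2 => gradient v z) = G := by funext z; rw [hgradeq]
    rw [this]; exact hG_cont.continuousOn
  have hAint' : IntegrableOn (fun z : E2 => ‖gradient v z‖ ^ 2) Ω volume := by
    rw [hg2]; exact hA_int
  have hBint' : IntegrableOn (fun z : E2 => v z ^ 2) (frontier Ω) μH[((2:ℕ):ℝ) - 1] := by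
    rw [hμeq]; exact hB_int
  refine ⟨v, ⟨hv_cont.continuousOn, fun z _ => (hgrad z).differentiableAt, hgradcont,
    hD_int, hD_pos, hAint', hBint'⟩, ?_⟩
  -- the Rayleigh quotient estimate
  have hARW : ∫ z in Ω, ‖gradient v z‖ ^ 2 = ∫ z in Ω, ‖G z‖ ^ 2 := by rw [hg2]
  -- numerator bound
  have hmul : (2*ε)^p = 2^p * ε^p := Real.mul_rpow (by norm_num) hε0.le
  have hεp : ε^p ≤ ε^(2:ℝ) := Real.rpow_le_rpow_of_exponent_ge hε0 hεle1 hp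
  have hε2 : ε^(2:ℝ) = ε^(2:ℕ) := by
    rw [show (2:ℝ) = ((2:ℕ):ℝ) by norm_num, Real.rpow_natCast]
  have h2p : (0:ℝ) < 2^p := Real.rpow_pos_of_pos two_pos p
  have hA1 : (64/ε^2) * Dbar ≤ 128 * 2^p * ε := by
    rw [hDbardef, hmul]
    rw [hε2] at hεp
    have heq : (64/ε^(2:ℕ)) * (ε * (2 * (2^p * ε^p))) = 128 * 2^p * (ε^p / ε) := by
      field_simp
      ring
    rw [heq]
    have hdivle : ε^p / ε ≤ ε := by
      rw [div_le_iff₀ hε0]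
      calc ε^p ≤ ε^(2:ℕ) := hεp
      _ = ε * ε := by ring
    exact mul_le_mul_of_nonneg_left hdivle (by positivity)
  have hA2 : ∫ z in Ω, ‖gradient v z‖ ^ 2 ≤ 128 * 2^p * ε := by
    rw [hARW]; exact le_trans hA_le hA1
  have hsplit : (2:ℝ)^(p+12) = 2^p * 2^(12:ℝ) := Real.rpow_add two_pos p 12
  have h2_12 : (2:ℝ)^(12:ℝ) = 4096 := by
    rw [show (12:ℝ) = ((12:ℕ):ℝ) by norm_num, Real.rpow_natCast]; norm_num
  have hγ' : 2^p * 4096 ≤ γ := by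
    rw [hsplit, h2_12] at hγ; linarith
  have h3 : 128 * 2^p ≤ γ/32 := by linarith
  have h4 : 128 * 2^p * ε ≤ γ/32 * ε := mul_le_mul_of_nonneg_right h3 hε0.le
  have h2 : γ * (ε/16) ≤ γ * ∫ z in F, v z ^ 2 ∂μH[1] :=
    mul_le_mul_of_nonneg_left hB_ge hγpos.le
  have hNum : (∫ z in Ω, ‖gradient v z‖ ^ 2) - γ * ∫ z in F, v z ^ 2 ∂μH[1]
      ≤ -(γ*ε/32) := by
    linarith
  have hstep1 : ((∫ z in Ω, ‖gradient v z‖ ^ 2) - γ * ∫ z in F, v z ^ 2 ∂μH[1]) /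
      (∫ z in Ω, v z ^ 2) ≤ (-(γ*ε/32)) / (∫ z in Ω, v z ^ 2) :=
    (div_le_div_iff_of_pos_right hD_pos).mpr hNum
  have hstep2 : (-(γ*ε/32)) / (∫ z in Ω, v z ^ 2) ≤ (-(γ*ε/32)) / Dbar := by
    rw [div_le_div_iff₀ hD_pos hDbar_pos]
    have hneg : -(γ*ε/32) ≤ 0 := by nlinarith
    exact mul_le_mul_of_nonpos_left hD_le hneg
  have hstep3 : (-(γ*ε/32)) / Dbar = -γ/(64*(2*ε)^p) := by
    rw [hDbardef, div_eq_div_iff (by positivity) (by positivity)]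
    ring
  show RQ Ω γ v ≤ -γ/(64*(2*ε)^p)
  unfold RQ
  rw [hμeq, ← hFdef]
  calc ((∫ z in Ω, ‖gradient v z‖ ^ 2) - γ * ∫ z in F, v z ^ 2 ∂μH[1]) /
      (∫ z in Ω, v z ^ 2) ≤ (-(γ*ε/32)) / (∫ z in Ω, v z ^ 2) := hstep1
  _ ≤ (-(γ*ε/32)) / Dbar := hstep2
  _ = -γ/(64*(2*ε)^p) := hstep3

end Stmt17Aux

/-- For the cusp domain `Υ_p` with `p ≥ 2`, for every `N > 0` there are `C > 0` and
`γ₀ > 0` such that for `γ ≥ γ₀` some admissible test function has Rayleigh quotient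
`≤ -C γ^N`; in particular `Λ(Υ_p;γ) ≤ -C γ^N`. -/
theorem stmt17 (p : ℝ) (hp : 2 ≤ p) :
    ∀ N : ℝ, 0 < N →
      ∃ C : ℝ, 0 < C ∧ ∃ γ₀ : ℝ, 0 < γ₀ ∧ ∀ γ : ℝ, γ₀ ≤ γ →
        (∃ v, Admissible (cuspDomain p) v ∧
          RQ (cuspDomain p) γ v ≤ -C * γ ^ N) ∧
        principalEV (cuspDomain p) γ ≤ ((-C * γ ^ N : ℝ) : EReal) := by
  intro N hN
  refine ⟨1/64, by norm_num, (2:ℝ)^(p+12), Real.rpow_pos_of_pos two_pos _, ?_⟩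
  intro γ hγ
  have hγ1 : (1:ℝ) ≤ γ := by
    refine le_trans ?_ hγ
    calc (1:ℝ) = (2:ℝ) ^ (0:ℝ) := (Real.rpow_zero 2).symm
    _ ≤ (2:ℝ) ^ (p+12) := Real.rpow_le_rpow_of_exponent_le one_le_two (by linarith)
  have hγpos : (0:ℝ) < γ := lt_of_lt_of_le one_pos hγ1
  set ε : ℝ := γ^(-N)/2 with hεdef
  have hrppos : 0 < γ^(-N) := Real.rpow_pos_of_pos hγpos _
  have hε0 : 0 < ε := by rw [hεdef]; positivity
  have h2ε : 2*ε = γ^(-N) := by rw [hεdef]; ring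
  have hε1 : 2*ε ≤ 1 := by
    rw [h2ε]
    exact Real.rpow_le_one_of_one_le_of_nonpos hγ1 (by linarith)
  obtain ⟨v, hadm, hRQ⟩ := Stmt17Aux.key hp hε0 hε1 hγ
  have hbound : -γ / (64*(2*ε)^p) ≤ -(1/64) * γ^N := by
    rw [h2ε]
    have h1 : (γ^(-N))^p = γ^(-(N*p)) := by
      rw [← Real.rpow_mul hγpos.le]
      ring_nf
    have h2 : γ^(-(N*p)) = (γ^(N*p))⁻¹ := Real.rpow_neg hγpos.le _
    have hX : 0 < γ^(N*p) := Real.rpow_pos_of_pos hγpos _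
    have hNp : γ^N ≤ γ^(1+N*p) := Real.rpow_le_rpow_of_exponent_le hγ1 (by nlinarith)
    have hrw : γ * γ^(N*p) = γ^(1+N*p) := by
      rw [Real.rpow_add hγpos, Real.rpow_one]
    rw [h1, h2]
    have heq : -γ/(64 * (γ^(N*p))⁻¹) = -(γ * γ^(N*p))/64 := by
      field_simp
    rw [heq, hrw]
    linarith
  have hfinal : RQ (cuspDomain p) γ v ≤ -(1/64) * γ^N := le_trans hRQ hbound
  refine ⟨⟨v, hadm, hfinal⟩, ?_⟩
  have hmem : ((RQ (cuspDomain p) γ v : ℝ) : EReal) ∈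
      {x : EReal | ∃ w, Admissible (cuspDomain p) w ∧ x = ((RQ (cuspDomain p) γ w : ℝ) : EReal)} :=
    ⟨v, hadm, rfl⟩
  refine le_trans (sInf_le hmem) ?_
  exact EReal.coe_le_coe_iff.mpr hfinal

end
end
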